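/- arXiv:2501.00270 — 5 statements merged into one kernel-verified Lean document; each statement's English description precedes it below -/
import Mathlib

section
/- Let ψ be an analytic wavelet in L¹ ∩ L² with ψ̂ Lipschitz continuous on [0,∞), and Φ a stationary Gaussian process with spectral density p satisfying p(λ) ≤ C₁|λ|^{-(1+γ)} for all λ ≠ 0, for some γ ∈ (0,2) and C₁ > 0. Then for all s₁, s₂ > 0 with |s₁ - s₂| ≤ 1, the canonical distance d(s₁,s₂) = (∫_0^∞ |ψ̂(s₁λ) - ψ̂(s₂λ)|² p(λ) dλ)^{1/2} satisfies d(s₁,s₂) ≤ C₂ |s₁ - s₂|^{γ/2}, where C₂ = max{1, [C₁(1/γ + 2/(2-γ))(2‖ψ̂‖_∞)^{2-γ}‖ψ̂‖_Lip^γ + 2‖ψ̂‖_∞² Var(Φ(0))]^{1/2}}. -/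
open MeasureTheory Set

/-- Hölder continuity of the canonical distance of the analytic wavelet transform:
if `ψ̂` is bounded by `Mψ` and Lipschitz on `[0,∞)` with constant `K`, and the spectral
density `p` of `Φ` satisfies `p(λ) ≤ C₁|λ|^{-(1+γ)}` for `λ ≠ 0` with `γ ∈ (0,2)`, then
for `s₁, s₂ > 0` with `|s₁-s₂| ≤ 1`,
`d(s₁,s₂) = (∫_0^∞ |ψ̂(s₁λ)-ψ̂(s₂λ)|² p(λ) dλ)^{1/2} ≤ C₂ |s₁-s₂|^{γ/2}`, where
`C₂ = max{1, √(C₁(1/γ + 2/(2-γ))(2Mψ)^{2-γ} K^γ + 2 Mψ² Var(Φ(0)))}` and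
`Var(Φ(0)) = ∫_ℝ p`. -/
theorem stmt6 (ψhat : ℝ → ℂ) (p : ℝ → ℝ)
    (hp_nonneg : ∀ l : ℝ, 0 ≤ p l)
    (hp_int : Integrable p (volume : Measure ℝ))
    (γ C₁ : ℝ) (hγ : γ ∈ Set.Ioo (0:ℝ) 2) (hC₁ : 0 < C₁)
    (hp_tail : ∀ l : ℝ, l ≠ 0 → p l ≤ C₁ * |l| ^ (-(1 + γ)))
    (Mψ : ℝ) (hMψ : ∀ l : ℝ, ‖ψhat l‖ ≤ Mψ)
    (K : NNReal) (hLip : LipschitzOnWith K ψhat (Set.Ici 0))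
    (VarΦ : ℝ) (hVar : VarΦ = ∫ l : ℝ, p l)
    (C₂ : ℝ)
    (hC₂ : C₂ = max 1 (Real.sqrt
      (C₁ * (1 / γ + 2 / (2 - γ)) * (2 * Mψ) ^ (2 - γ) * (K : ℝ) ^ (γ : ℝ)
        + 2 * Mψ ^ 2 * VarΦ))) :
    ∀ s₁ s₂ : ℝ, 0 < s₁ → 0 < s₂ → |s₁ - s₂| ≤ 1 →
      Real.sqrt (∫ l in Set.Ioi (0:ℝ), ‖ψhat (s₁ * l) - ψhat (s₂ * l)‖ ^ 2 * p l)
        ≤ C₂ * |s₁ - s₂| ^ (γ / 2) := by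
  intro s₁ s₂ hs₁ hs₂ hdist
  obtain ⟨hγ0, hγ2⟩ := hγ
  have hsub : (0:ℝ) < 2 - γ := by linarith
  have hVar0 : 0 ≤ VarΦ := hVar ▸ integral_nonneg hp_nonneg
  have hMψ0 : 0 ≤ Mψ := le_trans (norm_nonneg _) (hMψ 0)
  set A : ℝ := C₁ * (1 / γ + 2 / (2 - γ)) * (2 * Mψ) ^ (2 - γ) * (K : ℝ) ^ (γ : ℝ)
        + 2 * Mψ ^ 2 * VarΦ with hA_def
  have hC₂1 : (1:ℝ) ≤ C₂ := by rw [hC₂]; exact le_max_left _ _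
  have hC₂0 : (0:ℝ) ≤ C₂ := by linarith
  set h : ℝ := |s₁ - s₂| with hh_def
  have hh0 : 0 ≤ h := abs_nonneg _
  have hRHS0 : 0 ≤ C₂ * h ^ (γ / 2) := mul_nonneg hC₂0 (Real.rpow_nonneg hh0 _)
  have triv : (∀ l ∈ Ioi (0:ℝ), ‖ψhat (s₁ * l) - ψhat (s₂ * l)‖ ^ 2 * p l = 0) →
      Real.sqrt (∫ l in Set.Ioi (0:ℝ), ‖ψhat (s₁ * l) - ψhat (s₂ * l)‖ ^ 2 * p l)
        ≤ C₂ * h ^ (γ / 2) := by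
    intro hz
    have hz' : (∫ l in Set.Ioi (0:ℝ), ‖ψhat (s₁ * l) - ψhat (s₂ * l)‖ ^ 2 * p l) = 0 := by
      rw [setIntegral_congr_fun measurableSet_Ioi
        (show EqOn (fun l => ‖ψhat (s₁ * l) - ψhat (s₂ * l)‖ ^ 2 * p l) (fun _ => (0:ℝ))
          (Ioi 0) from fun l hl => hz l hl)]
      simp
    rw [hz', Real.sqrt_zero]
    exact hRHS0
  rcases eq_or_lt_of_le hh0 with hh | hh
  · -- s₁ = s₂
    have hs : s₁ = s₂ := by
      have h0 : s₁ - s₂ = 0 := abs_eq_zero.mp hh.symm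
      linarith
    apply triv
    intro l _
    rw [hs]
    simp
  rcases eq_or_lt_of_le hMψ0 with hM | hM
  · -- ψhat ≡ 0
    apply triv
    intro l _
    have h1 : ψhat (s₁ * l) = 0 := norm_le_zero_iff.mp (le_trans (hMψ _) hM.symm.le)
    have h2 : ψhat (s₂ * l) = 0 := norm_le_zero_iff.mp (le_trans (hMψ _) hM.symm.le)
    simp [h1, h2]
  rcases eq_or_lt_of_le K.coe_nonneg with hK | hK
  · -- K = 0
    apply triv
    intro l hl
    have hl0 : (0:ℝ) < l := hl
    have hmem1 : s₁ * l ∈ Ici (0:ℝ) := le_of_lt (mul_pos hs₁ hl0)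
    have hmem2 : s₂ * l ∈ Ici (0:ℝ) := le_of_lt (mul_pos hs₂ hl0)
    have hd : dist (ψhat (s₁ * l)) (ψhat (s₂ * l)) ≤ 0 := by
      calc dist (ψhat (s₁ * l)) (ψhat (s₂ * l)) ≤ (K:ℝ) * dist (s₁*l) (s₂*l) :=
            hLip.dist_le_mul _ hmem1 _ hmem2
        _ = 0 := by rw [← hK]; ring
    have : ψhat (s₁ * l) = ψhat (s₂ * l) := dist_le_zero.mp hd
    simp [this]
  -- main case: 0 < h, 0 < Mψ, 0 < K
  set t : ℝ := (K:ℝ) * h with ht_def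
  have ht : 0 < t := mul_pos hK hh
  set Λ : ℝ := 2 * Mψ / t with hΛ_def
  have hΛ : 0 < Λ := div_pos (by linarith) ht
  set g : ℝ → ℝ := fun l => min ((t * l) ^ 2) ((2 * Mψ) ^ 2) * p l with hg_def
  have hfg : ∀ l ∈ Ioi (0:ℝ), ‖ψhat (s₁ * l) - ψhat (s₂ * l)‖ ^ 2 * p l ≤ g l := by
    intro l hl
    have hl0 : (0:ℝ) < l := hl
    have hmem1 : s₁ * l ∈ Ici (0:ℝ) := le_of_lt (mul_pos hs₁ hl0)
    have hmem2 : s₂ * l ∈ Ici (0:ℝ) := le_of_lt (mul_pos hs₂ hl0)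
    have hlip : ‖ψhat (s₁ * l) - ψhat (s₂ * l)‖ ≤ t * l := by
      have hd := hLip.dist_le_mul _ hmem1 _ hmem2
      rw [dist_eq_norm, Real.dist_eq] at hd
      have habs : |s₁ * l - s₂ * l| = h * l := by
        rw [← sub_mul, abs_mul, abs_of_pos hl0, hh_def]
      rw [habs] at hd
      calc ‖ψhat (s₁ * l) - ψhat (s₂ * l)‖ ≤ (K:ℝ) * (h * l) := hd
        _ = t * l := by rw [ht_def]; ring
    have hbdd : ‖ψhat (s₁ * l) - ψhat (s₂ * l)‖ ≤ 2 * Mψ :=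
      (norm_sub_le _ _).trans (by linarith [hMψ (s₁ * l), hMψ (s₂ * l)])
    have hsq : ‖ψhat (s₁ * l) - ψhat (s₂ * l)‖ ^ 2 ≤ min ((t * l) ^ 2) ((2 * Mψ) ^ 2) :=
      le_min (pow_le_pow_left₀ (norm_nonneg _) hlip 2)
        (pow_le_pow_left₀ (norm_nonneg _) hbdd 2)
    simp only [hg_def]
    exact mul_le_mul_of_nonneg_right hsq (hp_nonneg l)
  have hg_meas : AEStronglyMeasurable g (volume.restrict (Ioi (0:ℝ))) := by
    apply AEStronglyMeasurable.mul
    · exact (Continuous.aestronglyMeasurable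
        (((continuous_const.mul continuous_id).pow 2).min continuous_const)).restrict
    · exact hp_int.aestronglyMeasurable.restrict
  have hg_int : IntegrableOn g (Ioi (0:ℝ)) := by
    apply Integrable.mono' ((hp_int.const_mul ((2 * Mψ) ^ 2)).restrict) hg_meas
    filter_upwards with l
    simp only [hg_def]
    rw [Real.norm_eq_abs, abs_mul, abs_of_nonneg (hp_nonneg l),
      abs_of_nonneg (le_min (sq_nonneg _) (sq_nonneg _))]
    exact mul_le_mul_of_nonneg_right (min_le_right _ _) (hp_nonneg l)
  have step1 : (∫ l in Set.Ioi (0:ℝ), ‖ψhat (s₁ * l) - ψhat (s₂ * l)‖ ^ 2 * p l)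
      ≤ ∫ l in Set.Ioi (0:ℝ), g l :=
    integral_mono_of_nonneg (Filter.Eventually.of_forall (fun l => mul_nonneg (by positivity) (hp_nonneg l)))
      hg_int (ae_restrict_of_forall_mem measurableSet_Ioi hfg)
  have hsplit : (∫ l in Set.Ioi (0:ℝ), g l)
      = (∫ l in Ioc (0:ℝ) Λ, g l) + ∫ l in Ioi Λ, g l := by
    rw [← setIntegral_union (Ioc_disjoint_Ioi le_rfl) measurableSet_Ioi
      (hg_int.mono_set (fun x hx => hx.1))
      (hg_int.mono_set (fun x hx => lt_trans hΛ hx)),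
      Ioc_union_Ioi_eq_Ioi hΛ.le]
  have hexp1 : (-1:ℝ) < 1 - γ := by linarith
  have hexp2 : -(1 + γ) < (-1:ℝ) := by linarith
  have hpiece1 : (∫ l in Ioc (0:ℝ) Λ, g l) ≤ t ^ 2 * C₁ * (Λ ^ (2 - γ) / (2 - γ)) := by
    have hH1_int : IntegrableOn (fun l : ℝ => t ^ 2 * C₁ * l ^ (1 - γ)) (Ioc (0:ℝ) Λ) :=
      ((intervalIntegrable_iff_integrableOn_Ioc_of_le hΛ.le).mp
        (intervalIntegral.intervalIntegrable_rpow' hexp1)).const_mul _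
    have hmono : ∀ l ∈ Ioc (0:ℝ) Λ, g l ≤ t ^ 2 * C₁ * l ^ (1 - γ) := by
      intro l hl
      have hl0 : 0 < l := hl.1
      have h2 : p l ≤ C₁ * l ^ (-(1 + γ)) := by
        have := hp_tail l (ne_of_gt hl0); rwa [abs_of_pos hl0] at this
      have h4 : l ^ 2 * l ^ (-(1 + γ)) = l ^ (1 - γ) := by
        rw [← Real.rpow_two, ← Real.rpow_add hl0]
        congr 1
        ring
      calc g l ≤ (t * l) ^ 2 * p l := by
            simp only [hg_def]
            exact mul_le_mul_of_nonneg_right (min_le_left _ _) (hp_nonneg l)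
        _ ≤ (t * l) ^ 2 * (C₁ * l ^ (-(1 + γ))) :=
            mul_le_mul_of_nonneg_left h2 (sq_nonneg _)
        _ = t ^ 2 * C₁ * l ^ (1 - γ) := by linear_combination (t ^ 2 * C₁) * h4
    have hstep := setIntegral_mono_on (hg_int.mono_set (fun x hx => hx.1)) hH1_int
      measurableSet_Ioc hmono
    refine hstep.trans ?_
    rw [MeasureTheory.integral_const_mul]
    have hval : (∫ l in Ioc (0:ℝ) Λ, l ^ (1 - γ)) = Λ ^ (2 - γ) / (2 - γ) := by
      rw [← intervalIntegral.integral_of_le hΛ.le, integral_rpow (Or.inl hexp1),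
        Real.zero_rpow (show (1 - γ + 1) ≠ 0 from (by linarith : (0:ℝ) < 1 - γ + 1).ne')]
      have he : (1 - γ + 1) = 2 - γ := by ring
      rw [he, sub_zero]
    rw [hval]
  have hpiece2 : (∫ l in Ioi Λ, g l) ≤ 4 * Mψ ^ 2 * C₁ * (Λ ^ (-γ) / γ) := by
    have hH2_int : IntegrableOn (fun l : ℝ => 4 * Mψ ^ 2 * C₁ * l ^ (-(1 + γ))) (Ioi Λ) :=
      (integrableOn_Ioi_rpow_of_lt hexp2 hΛ).const_mul _
    have hmono : ∀ l ∈ Ioi Λ, g l ≤ 4 * Mψ ^ 2 * C₁ * l ^ (-(1 + γ)) := by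
      intro l hl
      have hl0 : 0 < l := hΛ.trans hl
      have h2 : p l ≤ C₁ * l ^ (-(1 + γ)) := by
        have := hp_tail l (ne_of_gt hl0); rwa [abs_of_pos hl0] at this
      calc g l ≤ (2 * Mψ) ^ 2 * p l := by
            simp only [hg_def]
            exact mul_le_mul_of_nonneg_right (min_le_right _ _) (hp_nonneg l)
        _ ≤ (2 * Mψ) ^ 2 * (C₁ * l ^ (-(1 + γ))) :=
            mul_le_mul_of_nonneg_left h2 (sq_nonneg _)
        _ = 4 * Mψ ^ 2 * C₁ * l ^ (-(1 + γ)) := by ring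
    have hstep := setIntegral_mono_on
      (hg_int.mono_set (show Ioi Λ ⊆ Ioi 0 from fun x hx => lt_trans hΛ hx)) hH2_int
      measurableSet_Ioi hmono
    refine hstep.trans ?_
    rw [MeasureTheory.integral_const_mul, integral_Ioi_rpow_of_lt hexp2 hΛ]
    have he : -(1 + γ) + 1 = -γ := by ring
    rw [he, neg_div_neg_eq]
  -- algebraic identities
  have htt : t ^ 2 / t ^ (2 - γ) = t ^ γ := by
    rw [← Real.rpow_two, ← Real.rpow_sub ht]
    have : (2:ℝ) - (2 - γ) = γ := by ring
    rw [this]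
  have hΛ1 : t ^ 2 * Λ ^ (2 - γ) = (2 * Mψ) ^ (2 - γ) * t ^ γ := by
    rw [hΛ_def, Real.div_rpow (by linarith : (0:ℝ) ≤ 2 * Mψ) ht.le, ← htt]
    ring
  have h2m : (2 * Mψ) ^ (γ:ℝ) ≠ 0 := (Real.rpow_pos_of_pos (by linarith) _).ne'
  have htγ0 : t ^ γ ≠ 0 := (Real.rpow_pos_of_pos ht _).ne'
  have hmm : (2 * Mψ) ^ 2 / (2 * Mψ) ^ (γ:ℝ) = (2 * Mψ) ^ (2 - γ) := by
    rw [← Real.rpow_two, ← Real.rpow_sub (by linarith : (0:ℝ) < 2 * Mψ)]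
  have hΛ2 : 4 * Mψ ^ 2 * Λ ^ (-γ) = (2 * Mψ) ^ (2 - γ) * t ^ γ := by
    rw [hΛ_def, Real.div_rpow (by linarith : (0:ℝ) ≤ 2 * Mψ) ht.le,
      Real.rpow_neg (by linarith : (0:ℝ) ≤ 2 * Mψ), Real.rpow_neg ht.le, ← hmm]
    field_simp
    norm_num
  have htγ_eq : t ^ γ = (K:ℝ) ^ γ * h ^ γ := by
    rw [ht_def]; exact Real.mul_rpow K.coe_nonneg hh0
  have hB : t ^ 2 * C₁ * (Λ ^ (2 - γ) / (2 - γ)) + 4 * Mψ ^ 2 * C₁ * (Λ ^ (-γ) / γ)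
      = C₁ * (1 / (2 - γ) + 1 / γ) * ((2 * Mψ) ^ (2 - γ) * ((K:ℝ) ^ γ * h ^ γ)) := by
    have e1 : t ^ 2 * C₁ * (Λ ^ (2 - γ) / (2 - γ)) = (C₁ / (2 - γ)) * (t ^ 2 * Λ ^ (2 - γ)) := by
      ring
    have e2 : 4 * Mψ ^ 2 * C₁ * (Λ ^ (-γ) / γ) = (C₁ / γ) * (4 * Mψ ^ 2 * Λ ^ (-γ)) := by
      ring
    rw [e1, e2, hΛ1, hΛ2, htγ_eq]
    ring
  have hfinal_le : C₁ * (1 / (2 - γ) + 1 / γ) * ((2 * Mψ) ^ (2 - γ) * ((K:ℝ) ^ γ * h ^ γ))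
      ≤ A * h ^ γ := by
    rw [hA_def]
    have hpos : 0 < (2 * Mψ) ^ (2 - γ) := Real.rpow_pos_of_pos (by linarith) _
    have hposK : 0 < (K:ℝ) ^ γ := Real.rpow_pos_of_pos hK _
    have hposh : 0 < h ^ γ := Real.rpow_pos_of_pos hh _
    have hvar2 : 0 ≤ 2 * Mψ ^ 2 * VarΦ := mul_nonneg (by positivity) hVar0
    have hu : 0 < 1 / (2 - γ) := by positivity
    have e : (C₁ * (1 / γ + 2 / (2 - γ)) * (2 * Mψ) ^ (2 - γ) * (K:ℝ) ^ (γ:ℝ)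
          + 2 * Mψ ^ 2 * VarΦ) * h ^ γ
        = C₁ * (1 / (2 - γ) + 1 / γ) * ((2 * Mψ) ^ (2 - γ) * ((K:ℝ) ^ γ * h ^ γ))
          + C₁ * (1 / (2 - γ)) * ((2 * Mψ) ^ (2 - γ) * ((K:ℝ) ^ γ * h ^ γ))
          + (2 * Mψ ^ 2 * VarΦ) * h ^ γ := by ring
    rw [e]
    have t3 : 0 ≤ C₁ * (1 / (2 - γ)) * ((2 * Mψ) ^ (2 - γ) * ((K:ℝ) ^ γ * h ^ γ)) :=
      le_of_lt (mul_pos (mul_pos hC₁ hu) (mul_pos hpos (mul_pos hposK hposh)))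
    linarith [mul_nonneg hvar2 hposh.le]
  have htotal : (∫ l in Set.Ioi (0:ℝ), ‖ψhat (s₁ * l) - ψhat (s₂ * l)‖ ^ 2 * p l)
      ≤ A * h ^ γ := by
    calc (∫ l in Set.Ioi (0:ℝ), ‖ψhat (s₁ * l) - ψhat (s₂ * l)‖ ^ 2 * p l)
        ≤ ∫ l in Set.Ioi (0:ℝ), g l := step1
      _ = (∫ l in Ioc (0:ℝ) Λ, g l) + ∫ l in Ioi Λ, g l := hsplit
      _ ≤ t ^ 2 * C₁ * (Λ ^ (2 - γ) / (2 - γ)) + 4 * Mψ ^ 2 * C₁ * (Λ ^ (-γ) / γ) :=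
          add_le_add hpiece1 hpiece2
      _ = C₁ * (1 / (2 - γ) + 1 / γ) * ((2 * Mψ) ^ (2 - γ) * ((K:ℝ) ^ γ * h ^ γ)) := hB
      _ ≤ A * h ^ γ := hfinal_le
  have hA0 : 0 ≤ A := by
    rw [hA_def]
    have h1 : 0 < 1 / γ + 2 / (2 - γ) := add_pos (by positivity) (by positivity)
    have t1 : 0 ≤ C₁ * (1 / γ + 2 / (2 - γ)) * (2 * Mψ) ^ (2 - γ) * (K:ℝ) ^ (γ:ℝ) :=
      mul_nonneg (mul_nonneg (mul_nonneg hC₁.le h1.le)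
        (Real.rpow_nonneg (by linarith) _)) (Real.rpow_nonneg K.coe_nonneg _)
    have t2 : 0 ≤ 2 * Mψ ^ 2 * VarΦ := mul_nonneg (by positivity) hVar0
    linarith
  calc Real.sqrt (∫ l in Set.Ioi (0:ℝ), ‖ψhat (s₁ * l) - ψhat (s₂ * l)‖ ^ 2 * p l)
      ≤ Real.sqrt (A * h ^ γ) := Real.sqrt_le_sqrt htotal
    _ = Real.sqrt A * Real.sqrt (h ^ γ) := Real.sqrt_mul hA0 _
    _ = Real.sqrt A * h ^ (γ / 2) := by
        congr 1
        rw [show γ / 2 = γ * (1/2) by ring, Real.rpow_mul hh0, ← Real.sqrt_eq_rpow]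
    _ ≤ C₂ * h ^ (γ / 2) := by
        refine mul_le_mul_of_nonneg_right ?_ (Real.rpow_nonneg hh0 _)
        rw [hC₂]
        exact le_max_right _ _
end

section
/- Let ψ be an analytic wavelet such that sup_{λ>0}|ψ̂'(λ)| < ∞ (so |ψ̂(z)| ≤ ‖Dψ̂‖_∞ |z|), and Φ a stationary Gaussian process with finite variance and spectral density p satisfying p(λ) ≤ C₁|λ|^{-(1+γ)} for λ ≠ 0, γ ∈ (0,2). Then for all t ∈ ℝ and sufficiently small s > 0, E[|W_Φ(t,s)|²] = ∫_0^∞ |ψ̂(sλ)|² p(λ) dλ ≤ [‖Dψ̂‖_∞² E[Φ(0)²] + ‖ψ̂‖_∞² C₁ γ^{-1}] · s^{2γ/(2+γ)}. Consequently E[|W_Φ(t,s)|²] → 0 as s → 0⁺. -/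
open MeasureTheory Set Filter

/-- Small-scale behaviour of the variance of the AWT: if `ψ̂(0) = 0`, `ψ̂` is continuous on
`[0,∞)`, differentiable on `(0,∞)` with derivative bounded by `KD` (so `|ψ̂(z)| ≤ KD·|z|`),
`ψ̂` is bounded by `Mψ`, and the spectral density `p ≥ 0` is integrable with tail bound
`p(λ) ≤ C₁|λ|^{-(1+γ)}`, `γ ∈ (0,2)`, then for all sufficiently small `s > 0`,
`E[|W_Φ(t,s)|²] = ∫_0^∞ |ψ̂(sλ)|² p(λ) dλ ≤ [KD² E[Φ(0)²] + Mψ² C₁ γ⁻¹] s^{2γ/(2+γ)}`;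
consequently the integral tends to `0` as `s → 0⁺`. -/
theorem stmt9 (ψhat : ℝ → ℂ) (Dψ : ℝ → ℂ) (p : ℝ → ℝ)
    (hψ0 : ψhat 0 = 0)
    (hψcont : ContinuousOn ψhat (Set.Ici 0))
    (hderiv : ∀ l : ℝ, 0 < l → HasDerivAt ψhat (Dψ l) l)
    (KD : ℝ) (hKD : ∀ l : ℝ, 0 < l → ‖Dψ l‖ ≤ KD)
    (Mψ : ℝ) (hMψ : ∀ l : ℝ, ‖ψhat l‖ ≤ Mψ)
    (hp_nonneg : ∀ l : ℝ, 0 ≤ p l)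
    (hp_int : Integrable p (volume : Measure ℝ))
    (γ C₁ : ℝ) (hγ : γ ∈ Set.Ioo (0:ℝ) 2) (hC₁ : 0 < C₁)
    (hp_tail : ∀ l : ℝ, l ≠ 0 → p l ≤ C₁ * |l| ^ (-(1 + γ)))
    (VarΦ : ℝ) (hVar : VarΦ = ∫ l : ℝ, p l) :
    (∃ s₀ : ℝ, 0 < s₀ ∧ ∀ s : ℝ, 0 < s → s ≤ s₀ →
        (∫ l in Set.Ioi (0:ℝ), ‖ψhat (s * l)‖ ^ 2 * p l)
          ≤ (KD ^ 2 * VarΦ + Mψ ^ 2 * C₁ * γ⁻¹) * s ^ (2 * γ / (2 + γ)))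
      ∧ Tendsto (fun s : ℝ => ∫ l in Set.Ioi (0:ℝ), ‖ψhat (s * l)‖ ^ 2 * p l)
          (nhdsWithin 0 (Set.Ioi 0)) (nhds 0) := by
  -- basic positivity facts
  obtain ⟨hγ0, hγ2⟩ := hγ
  have h2γ : (0:ℝ) < 2 + γ := by linarith
  have hKD0 : 0 ≤ KD := le_trans (norm_nonneg _) (hKD 1 one_pos)
  have hMψ0 : 0 ≤ Mψ := le_trans (norm_nonneg _) (hMψ 0)
  have hVar0 : 0 ≤ VarΦ := by
    rw [hVar]; exact integral_nonneg hp_nonneg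
  set ε : ℝ := 2 * γ / (2 + γ) with hεdef
  have hε0 : 0 < ε := by positivity
  -- linear bound |ψhat x| ≤ KD x for x ≥ 0
  have key : ∀ x : ℝ, 0 ≤ x → ‖ψhat x‖ ≤ KD * x := by
    intro x hx
    rcases eq_or_lt_of_le hx with h | hx0
    · simp [← h, hψ0]
    have step : ∀ a : ℝ, a ∈ Ioc (0:ℝ) x → ‖ψhat x‖ - KD * x ≤ ‖ψhat a‖ := by
      intro a ⟨ha0, hax⟩
      have hmv : ‖ψhat x - ψhat a‖ ≤ KD * ‖x - a‖ := by
        apply (convex_Icc a x).norm_image_sub_le_of_norm_hasDerivWithin_le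
          (f' := Dψ) (fun l hl => (hderiv l (lt_of_lt_of_le ha0 hl.1)).hasDerivWithinAt)
          (fun l hl => hKD l (lt_of_lt_of_le ha0 hl.1))
        · exact ⟨le_refl a, hax⟩
        · exact ⟨hax, le_refl x⟩
      have habs : ‖x - a‖ = x - a := by
        rw [Real.norm_eq_abs, abs_of_nonneg (by linarith)]
      have h1 : ‖ψhat x‖ ≤ ‖ψhat x - ψhat a‖ + ‖ψhat a‖ := by
        simpa using norm_add_le (ψhat x - ψhat a) (ψhat a)
      have h2 : KD * (x - a) ≤ KD * x := by nlinarith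
      rw [habs] at hmv
      linarith
    have htend : Tendsto (fun a => ‖ψhat a‖) (nhdsWithin 0 (Ioi 0)) (nhds 0) := by
      have h0 : Tendsto ψhat (nhdsWithin 0 (Ici 0)) (nhds 0) := by
        have := (hψcont 0 Set.self_mem_Ici).tendsto
        rwa [hψ0] at this
      simpa using (h0.mono_left (nhdsWithin_mono 0 Ioi_subset_Ici_self)).norm
    have hev : ∀ᶠ a in nhdsWithin 0 (Ioi 0), ‖ψhat x‖ - KD * x ≤ ‖ψhat a‖ := by
      filter_upwards [Ioc_mem_nhdsGT_of_mem (α := ℝ) ⟨le_refl 0, hx0⟩] with a ha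
      exact step a ha
    have := ge_of_tendsto htend hev
    linarith
  -- the main bound, valid for all 0 < s
  have main : ∀ s : ℝ, 0 < s →
      (∫ l in Set.Ioi (0:ℝ), ‖ψhat (s * l)‖ ^ 2 * p l)
        ≤ (KD ^ 2 * VarΦ + Mψ ^ 2 * C₁ * γ⁻¹) * s ^ ε := by
    intro s hs
    set T : ℝ := s ^ (-2 / (2 + γ)) with hTdef
    have hT0 : 0 < T := Real.rpow_pos_of_pos hs _
    have hsε0 : 0 < s ^ ε := Real.rpow_pos_of_pos hs _
    -- rpow identities
    have hsT : (s * T) ^ 2 = s ^ ε := by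
      have h1 : s * T = s ^ (γ / (2 + γ)) := by
        rw [hTdef]
        nth_rewrite 1 [← Real.rpow_one s]
        rw [← Real.rpow_add hs]
        congr 1
        field_simp
        ring
      rw [h1, ← Real.rpow_natCast (s ^ (γ / (2 + γ))) 2, ← Real.rpow_mul hs.le]
      congr 1
      push_cast
      rw [hεdef]
      ring
    have hTγ : T ^ (-γ) = s ^ ε := by
      rw [hTdef, ← Real.rpow_mul hs.le]
      congr 1
      rw [hεdef]
      field_simp
    -- measurability / integrability
    have hψm : AEStronglyMeasurable (fun l => ψhat (s * l)) (volume.restrict (Ioi 0)) := by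
      apply ContinuousOn.aestronglyMeasurable _ measurableSet_Ioi
      exact hψcont.comp (continuous_const.mul continuous_id).continuousOn
        (fun l hl => le_of_lt (mul_pos hs hl))
    have hfm : AEStronglyMeasurable (fun l => ‖ψhat (s * l)‖ ^ 2 * p l)
        (volume.restrict (Ioi 0)) := by
      exact ((hψm.norm.mul hψm.norm).congr (by
        filter_upwards with l using (sq ‖ψhat (s * l)‖).symm)).mul
        hp_int.aestronglyMeasurable.restrict
    have hfint : IntegrableOn (fun l => ‖ψhat (s * l)‖ ^ 2 * p l) (Ioi 0) := by
      apply Integrable.mono' ((hp_int.restrict (s := Ioi 0)).const_mul (Mψ ^ 2)) hfm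
      filter_upwards with l
      rw [Real.norm_eq_abs, abs_of_nonneg (mul_nonneg (by positivity) (hp_nonneg l))]
      have := hMψ (s * l)
      have hb : ‖ψhat (s * l)‖ ^ 2 ≤ Mψ ^ 2 := by nlinarith [norm_nonneg (ψhat (s * l))]
      exact mul_le_mul_of_nonneg_right hb (hp_nonneg l)
    have hexp : -(1 + γ) < -1 := by linarith
    have htailint : IntegrableOn (fun l : ℝ => Mψ ^ 2 * C₁ * l ^ (-(1 + γ))) (Ioi T) :=
      (integrableOn_Ioi_rpow_of_lt hexp hT0).const_mul _
    have hgint : IntegrableOn (fun l : ℝ => KD ^ 2 * s ^ ε * p l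
        + (Ioi T).indicator (fun l : ℝ => Mψ ^ 2 * C₁ * l ^ (-(1 + γ))) l) (Ioi 0) := by
      apply Integrable.add ((hp_int.restrict (s := Ioi 0)).const_mul _)
      exact (htailint.integrable_indicator measurableSet_Ioi).restrict
    -- pointwise bound
    have hpt : ∀ l ∈ Ioi (0:ℝ), ‖ψhat (s * l)‖ ^ 2 * p l
        ≤ KD ^ 2 * s ^ ε * p l
          + (Ioi T).indicator (fun l : ℝ => Mψ ^ 2 * C₁ * l ^ (-(1 + γ))) l := by
      intro l hl
      rw [mem_Ioi] at hl
      by_cases hlT : l ≤ T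
      · have h1 : ‖ψhat (s * l)‖ ≤ KD * (s * l) := key _ (by positivity)
        have h2 : (KD * (s * l)) ^ 2 ≤ KD ^ 2 * s ^ ε := by
          rw [← hsT]
          have hle : s * l ≤ s * T := by nlinarith
          have h3 : (s * l) ^ 2 ≤ (s * T) ^ 2 := by nlinarith [mul_pos hs hl]
          calc (KD * (s * l)) ^ 2 = KD ^ 2 * (s * l) ^ 2 := by ring
            _ ≤ KD ^ 2 * (s * T) ^ 2 := mul_le_mul_of_nonneg_left h3 (sq_nonneg KD)
        have hψ2 : ‖ψhat (s * l)‖ ^ 2 ≤ KD ^ 2 * s ^ ε := by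
          nlinarith [norm_nonneg (ψhat (s * l))]
        have hind : (0:ℝ) ≤ (Ioi T).indicator (fun l : ℝ => Mψ ^ 2 * C₁ * l ^ (-(1 + γ))) l := by
          apply Set.indicator_nonneg
          intro x hx
          have hx0 : (0:ℝ) < x := lt_trans hT0 hx
          positivity
        have := mul_le_mul_of_nonneg_right hψ2 (hp_nonneg l)
        linarith
      · push_neg at hlT
        rw [Set.indicator_of_mem (mem_Ioi.2 hlT)]
        have hψ2 : ‖ψhat (s * l)‖ ^ 2 ≤ Mψ ^ 2 := by
          nlinarith [norm_nonneg (ψhat (s * l)), hMψ (s * l)]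
        have htail : p l ≤ C₁ * l ^ (-(1 + γ)) := by
          have := hp_tail l (ne_of_gt hl)
          rwa [abs_of_pos hl] at this
        have h1 : ‖ψhat (s * l)‖ ^ 2 * p l ≤ Mψ ^ 2 * (C₁ * l ^ (-(1 + γ))) := by
          apply mul_le_mul hψ2 htail (hp_nonneg l) (by positivity)
        have hrp : (0:ℝ) ≤ l ^ (-(1 + γ)) := le_of_lt (Real.rpow_pos_of_pos hl _)
        have hfirst : (0:ℝ) ≤ KD ^ 2 * s ^ ε * p l := mul_nonneg (by positivity) (hp_nonneg l)
        nlinarith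
    -- put it together
    calc (∫ l in Set.Ioi (0:ℝ), ‖ψhat (s * l)‖ ^ 2 * p l)
        ≤ ∫ l in Set.Ioi (0:ℝ), (KD ^ 2 * s ^ ε * p l
            + (Ioi T).indicator (fun l : ℝ => Mψ ^ 2 * C₁ * l ^ (-(1 + γ))) l) :=
          setIntegral_mono_on hfint hgint measurableSet_Ioi hpt
      _ = KD ^ 2 * s ^ ε * (∫ l in Set.Ioi (0:ℝ), p l)
            + Mψ ^ 2 * C₁ * ∫ l in Set.Ioi T, l ^ (-(1 + γ)) := by
          rw [integral_add ((hp_int.restrict (s := Ioi 0)).const_mul _)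
            ((htailint.integrable_indicator measurableSet_Ioi).restrict),
            integral_const_mul, setIntegral_indicator measurableSet_Ioi,
            Set.Ioi_inter_Ioi, max_eq_right hT0.le, integral_const_mul]
      _ ≤ KD ^ 2 * s ^ ε * VarΦ + Mψ ^ 2 * C₁ * (γ⁻¹ * s ^ ε) := by
          have hple : (∫ l in Set.Ioi (0:ℝ), p l) ≤ VarΦ := by
            rw [hVar]
            exact setIntegral_le_integral hp_int (Filter.Eventually.of_forall hp_nonneg)
          have hval : (∫ l in Set.Ioi T, l ^ (-(1 + γ))) = γ⁻¹ * s ^ ε := by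
            rw [integral_Ioi_rpow_of_lt hexp hT0]
            have h1 : -(1 + γ) + 1 = -γ := by ring
            rw [h1, hTγ]
            field_simp
          rw [hval]
          have : KD ^ 2 * s ^ ε * (∫ l in Set.Ioi (0:ℝ), p l) ≤ KD ^ 2 * s ^ ε * VarΦ := by
            apply mul_le_mul_of_nonneg_left hple (by positivity)
          linarith
      _ = (KD ^ 2 * VarΦ + Mψ ^ 2 * C₁ * γ⁻¹) * s ^ ε := by ring
  refine ⟨⟨1, one_pos, fun s hs _ => main s hs⟩, ?_⟩
  -- the limit
  have hlim : Tendsto (fun s : ℝ => (KD ^ 2 * VarΦ + Mψ ^ 2 * C₁ * γ⁻¹) * s ^ ε)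
      (nhdsWithin 0 (Ioi 0)) (nhds 0) := by
    have h1 : Tendsto (fun s : ℝ => s ^ ε) (nhds 0) (nhds ((0:ℝ) ^ ε)) :=
      (Real.continuousAt_rpow_const 0 ε (Or.inr hε0.le)).tendsto
    rw [Real.zero_rpow (ne_of_gt hε0)] at h1
    have h2 := (h1.mono_left (nhdsWithin_le_nhds (s := Set.Ioi (0:ℝ)))).const_mul
      (KD ^ 2 * VarΦ + Mψ ^ 2 * C₁ * γ⁻¹)
    rwa [mul_zero] at h2
  apply squeeze_zero' _ _ hlim
  · filter_upwards [eventually_mem_nhdsWithin] with s hs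
    exact integral_nonneg fun l => mul_nonneg (by positivity) (hp_nonneg l)
  · filter_upwards [eventually_mem_nhdsWithin] with s hs
    exact main s hs
end

section
/- Chaining bound (Dudley-type theorem for the AWT): Let X : [0,∞) → ℂ be a centered complex Gaussian process with X(0) = 0 and continuous sample paths, such that for all s₁ ≠ s₂ the normalized increment |X(s₁) - X(s₂)|²/d²(s₁,s₂) is Exp(1)-distributed, where d(s₁,s₂)² = E[|X(s₁)-X(s₂)|²]. Suppose there exist finite sets π_j ⊂ [0,∞) (j ≥ 0), with π₀ = {0} and cardinalities |π_j| ≤ N_j, such that sup_{s>0} inf_{s'∈π_j} d(s,s') ≤ D^{1-j} for a constant D ≥ 2. Then E[ sup_{s>0} |X(s)| ] ≤ (4/3) Σ_{j=0}^∞ D^{1-j} √(ln(2^{j+1} N_j N_{j+1})), provided the series converges. -/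
open MeasureTheory Set Filter ProbabilityTheory

/-- A family of complex random variables is (jointly) Gaussian if every finite real-linear
combination of real and imaginary parts of its members has a Gaussian distribution on `ℝ`. -/
def IsComplexGaussianFamily {Ω : Type*} [MeasurableSpace Ω] (P : Measure Ω)
    {ι : Type*} (W : ι → Ω → ℂ) : Prop :=
  ∀ (n : ℕ) (idx : Fin n → ι) (a b : Fin n → ℝ), ∃ (m : ℝ) (v : NNReal),
    Measure.map (fun ω => ∑ k, (a k * (W (idx k) ω).re + b k * (W (idx k) ω).im)) P
      = gaussianReal m v


/- Auxiliary lemmas -/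

open scoped ENNReal NNReal

lemma expTail (t : ℝ) (ht : 0 ≤ t) : expMeasure 1 (Ioi t) = ENNReal.ofReal (Real.exp (-t)) := by
  haveI : IsProbabilityMeasure (expMeasure 1) := isProbabilityMeasure_expMeasure one_pos
  have h1 : expMeasure 1 (Iic t) = ENNReal.ofReal (1 - Real.exp (-t)) := by
    rw [expMeasure, gammaMeasure, withDensity_apply _ measurableSet_Iic]
    have := lintegral_exponentialPDF_eq_antiDeriv one_pos t
    rw [if_pos ht, one_mul] at this
    exact this
  have h2 : Ioi t = (Iic t)ᶜ := by simp
  rw [h2, measure_compl measurableSet_Iic (measure_ne_top _ _), measure_univ, h1,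
    show (1:ENNReal) = ENNReal.ofReal 1 by simp,
    ← ENNReal.ofReal_sub _ (sub_nonneg.mpr (Real.exp_le_one_iff.mpr (by linarith)))]
  ring_nf

lemma dpos_of_exp {Ω : Type*} [MeasurableSpace Ω] (P : Measure Ω) [IsProbabilityMeasure P]
    (Y : Ω → ℝ) (d : ℝ)
    (h : Measure.map (fun ω => Y ω ^ 2 / d ^ 2) P = expMeasure 1) : d ≠ 0 := by
  intro hd
  have : (fun ω => Y ω ^ 2 / d ^ 2) = fun _ => (0:ℝ) := by
    funext ω; rw [hd]; simp
  rw [this, Measure.map_const, measure_univ, one_smul] at h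
  have h0 : (Measure.dirac (0:ℝ)) (Ioi (0:ℝ)) = 0 := by
    rw [Measure.dirac_apply' _ measurableSet_Ioi]; simp
  rw [h, expTail 0 le_rfl] at h0
  simp [Real.exp_zero] at h0

lemma tail_bound {Ω : Type*} [MeasurableSpace Ω] (P : Measure Ω) [IsProbabilityMeasure P]
    (Y : Ω → ℝ) (hY : Measurable Y) (hYnn : ∀ ω, 0 ≤ Y ω) (d : ℝ)
    (h : Measure.map (fun ω => Y ω ^ 2 / d ^ 2) P = expMeasure 1)
    (v : ℝ) (hv : 0 ≤ v) :
    P {ω | v < Y ω} ≤ ENNReal.ofReal (Real.exp (-(v ^ 2 / d ^ 2))) := by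
  have hd : d ≠ 0 := dpos_of_exp P Y d h
  have hd2 : (0:ℝ) < d ^ 2 := by positivity
  have hsub : {ω | v < Y ω} ⊆ (fun ω => Y ω ^ 2 / d ^ 2) ⁻¹' Ioi (v ^ 2 / d ^ 2) := by
    intro ω hω
    simp only [mem_preimage, mem_Ioi, mem_setOf_eq] at *
    have : v ^ 2 < Y ω ^ 2 := by nlinarith [hYnn ω]
    exact div_lt_div_of_pos_right this hd2
  calc P {ω | v < Y ω} ≤ P ((fun ω => Y ω ^ 2 / d ^ 2) ⁻¹' Ioi (v ^ 2 / d ^ 2)) :=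
        measure_mono hsub
    _ = (Measure.map (fun ω => Y ω ^ 2 / d ^ 2) P) (Ioi (v ^ 2 / d ^ 2)) := by
        rw [Measure.map_apply (by measurability) measurableSet_Ioi]
    _ = ENNReal.ofReal (Real.exp (-(v ^ 2 / d ^ 2))) := by
        rw [h, expTail _ (by positivity)]


lemma my_integral_exp_neg_mul_Ioi (a : ℝ) {b : ℝ} (hb : 0 < b) :
    ∫ x in Ioi a, Real.exp (-b * x) = Real.exp (-b * a) / b := by
  have h := MeasureTheory.integral_Ioi_of_hasDerivAt_of_tendsto
    (f := fun x => -Real.exp (-b * x) / b) (f' := fun x => Real.exp (-b * x)) (a := a) (m := 0)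
    ?_ ?_ (exp_neg_integrableOn_Ioi a hb) ?_
  · rw [h]; ring
  · have : Continuous (fun x : ℝ => -Real.exp (-b * x) / b) := by
      continuity
    exact this.continuousWithinAt
  · intro x hx
    have h1 : HasDerivAt (fun x : ℝ => -b * x) (-b) x := by
      simpa using (hasDerivAt_id x).const_mul (-b)
    have : HasDerivAt (fun x => Real.exp (-b * x)) (Real.exp (-b * x) * (-b)) x :=
      (Real.hasDerivAt_exp _).comp x h1
    convert (this.neg.div_const b) using 1
    · rfl
    · rfl
    · field_simp
  · have h2 : Tendsto (fun x => Real.exp (-b * x)) atTop (nhds 0) := by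
      apply Real.tendsto_exp_comp_nhds_zero.mpr
      exact Tendsto.const_mul_atTop_of_neg (neg_lt_zero.mpr hb) tendsto_id
    have := (h2.div_const b).neg
    simp only [zero_div, neg_zero] at this
    exact this.congr (fun x => by ring)

lemma sup_lintegral_bound {Ω : Type*} [MeasurableSpace Ω] (P : Measure Ω) [IsProbabilityMeasure P]
    {ι : Type*} (T : Finset ι) (Y : ι → Ω → ℝ)
    (hmeas : ∀ i, Measurable (Y i)) (hnn : ∀ i ω, 0 ≤ Y i ω)
    (a : ℝ) (ha : 0 < a)
    (htail : ∀ i ∈ T, ∀ v : ℝ, a ≤ v →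
      P {ω | v < Y i ω}
        ≤ ENNReal.ofReal (Real.exp (Real.log 2 * (9/4 - 3 * (v/a))) / T.card)) :
    ∫⁻ ω, (T.sup fun i => ENNReal.ofReal (Y i ω)) ∂P ≤ ENNReal.ofReal ((4/3) * a) := by
  rcases T.eq_empty_or_nonempty with rfl | hne
  · simp only [Finset.sup_empty]
    simp
  -- the real-valued sup
  set f : Ω → ℝ := fun ω => T.sup' hne (fun i => Y i ω) with hf
  have hf_nn : ∀ ω, 0 ≤ f ω := by
    intro ω
    obtain ⟨i, hi⟩ := hne
    exact le_trans (hnn i ω) (Finset.le_sup' (fun i => Y i ω) hi)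
  have hf_meas : Measurable f := by
    have := Finset.measurable_sup' hne (f := fun i => Y i) (fun n _ => hmeas n)
    have heq : f = T.sup' hne (fun i => Y i) := by
      funext ω; rw [hf]; exact (Finset.sup'_apply hne (fun i => Y i) ω).symm
    rw [heq]; exact this
  -- rewrite the ENNReal sup as ofReal of f
  have hsup_eq : ∀ ω, (T.sup fun i => ENNReal.ofReal (Y i ω)) = ENNReal.ofReal (f ω) := by
    intro ω
    rw [hf, ← Finset.sup'_eq_sup hne,
      Finset.comp_sup'_eq_sup'_comp hne (ENNReal.ofReal) (fun x y => Monotone.map_max (fun _ _ h => ENNReal.ofReal_le_ofReal h))]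
    rfl
  simp_rw [hsup_eq]
  rw [lintegral_eq_lintegral_meas_lt P (Filter.Eventually.of_forall hf_nn) hf_meas.aemeasurable]
  have hsplit : (Ioi (0:ℝ)) = Ioc 0 a ∪ Ioi a := (Ioc_union_Ioi_eq_Ioi ha.le).symm
  rw [hsplit, lintegral_union measurableSet_Ioi Ioc_disjoint_Ioi_same]
  have h1 : ∫⁻ t in Ioc 0 a, P {ω | t < f ω} ≤ ENNReal.ofReal a := by
    calc ∫⁻ t in Ioc 0 a, P {ω | t < f ω} ≤ ∫⁻ _ in Ioc 0 a, 1 :=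
          lintegral_mono (fun t => prob_le_one)
      _ = ENNReal.ofReal a := by simp [Real.volume_Ioc]
  have hcard : (0:ℝ) < T.card := by exact_mod_cast Finset.card_pos.mpr hne
  have h2p : ∀ t ∈ Ioi a, P {ω | t < f ω}
      ≤ ENNReal.ofReal (Real.exp (Real.log 2 * (9/4 - 3 * (t/a)))) := by
    intro t ht
    have hset : {ω | t < f ω} = ⋃ i ∈ T, {ω | t < Y i ω} := by
      ext ω
      simp only [mem_setOf_eq, hf, Finset.lt_sup'_iff, mem_iUnion, exists_prop]
    rw [hset]
    calc P (⋃ i ∈ T, {ω | t < Y i ω}) ≤ ∑ i ∈ T, P {ω | t < Y i ω} :=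
          measure_biUnion_finset_le T _
      _ ≤ ∑ _i ∈ T, ENNReal.ofReal (Real.exp (Real.log 2 * (9/4 - 3 * (t/a))) / T.card) :=
          Finset.sum_le_sum (fun i hi => htail i hi t (le_of_lt ht))
      _ = (T.card : ℝ≥0∞) * ENNReal.ofReal (Real.exp (Real.log 2 * (9/4 - 3 * (t/a))) / T.card) := by
          rw [Finset.sum_const, nsmul_eq_mul]
      _ = ENNReal.ofReal (Real.exp (Real.log 2 * (9/4 - 3 * (t/a)))) := by
          rw [← ENNReal.ofReal_natCast, ← ENNReal.ofReal_mul (by positivity)]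
          congr 1
          field_simp
  have hb : (0:ℝ) < 3 * Real.log 2 / a := by
    have := Real.log_pos (by norm_num : (1:ℝ) < 2)
    positivity
  have h2 : ∫⁻ t in Ioi a, P {ω | t < f ω}
      ≤ ENNReal.ofReal (Real.exp (-(3/4) * Real.log 2) * a / (3 * Real.log 2)) := by
    have hlog := Real.log_pos (by norm_num : (1:ℝ) < 2)
    have heq : ∀ t : ℝ, Real.exp (Real.log 2 * (9/4 - 3 * (t/a)))
        = Real.exp ((9/4) * Real.log 2) * Real.exp (-(3 * Real.log 2 / a) * t) := by
      intro t
      rw [← Real.exp_add]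
      congr 1
      field_simp
      ring
    calc ∫⁻ t in Ioi a, P {ω | t < f ω}
        ≤ ∫⁻ t in Ioi a, ENNReal.ofReal (Real.exp (Real.log 2 * (9/4 - 3 * (t/a)))) :=
          setLIntegral_mono' measurableSet_Ioi h2p
      _ = ENNReal.ofReal (∫ t in Ioi a, Real.exp (Real.log 2 * (9/4 - 3 * (t/a)))) := by
          rw [ofReal_integral_eq_lintegral_ofReal]
          · apply Integrable.congr ((exp_neg_integrableOn_Ioi a hb).const_mul
              (Real.exp ((9/4) * Real.log 2)))
            exact Filter.Eventually.of_forall (fun t => (heq t).symm)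
          · exact Filter.Eventually.of_forall (fun t => (Real.exp_pos _).le)
      _ = ENNReal.ofReal (Real.exp (-(3/4) * Real.log 2) * a / (3 * Real.log 2)) := by
          congr 1
          calc ∫ t in Ioi a, Real.exp (Real.log 2 * (9/4 - 3 * (t/a)))
              = ∫ t in Ioi a, Real.exp ((9/4) * Real.log 2) * Real.exp (-(3 * Real.log 2 / a) * t) :=
                by simp_rw [heq]
            _ = Real.exp ((9/4) * Real.log 2) * (Real.exp (-(3 * Real.log 2 / a) * a) / (3 * Real.log 2 / a)) := by
                rw [integral_const_mul, my_integral_exp_neg_mul_Ioi a hb]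
            _ = Real.exp (-(3/4) * Real.log 2) * a / (3 * Real.log 2) := by
                rw [show -(3 * Real.log 2 / a) * a = -(3 * Real.log 2) by field_simp,
                  show (-(3/4) : ℝ) * Real.log 2 = (9/4) * Real.log 2 + -(3 * Real.log 2) by ring,
                  Real.exp_add]
                field_simp
  calc _ ≤ ENNReal.ofReal a + ENNReal.ofReal (Real.exp (-(3/4) * Real.log 2) * a / (3 * Real.log 2)) :=
        add_le_add h1 h2
    _ ≤ ENNReal.ofReal ((4/3) * a) := by
        rw [← ENNReal.ofReal_add (by positivity) (by positivity)]
        apply ENNReal.ofReal_le_ofReal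
        have hlog := Real.log_two_gt_d9
        have hx : Real.exp (-(3/4) * Real.log 2) ≤ Real.log 2 := by
          have h4 : (Real.exp (-(3/4) * Real.log 2)) ^ 4 = 1 / 8 := by
            rw [← Real.exp_nat_mul]
            have he : ((4:ℕ):ℝ) * (-(3/4) * Real.log 2) = Real.log (((2:ℝ) ^ (3:ℕ))⁻¹) := by
              rw [Real.log_inv, Real.log_pow]
              push_cast
              ring
            rw [he, Real.exp_log (by norm_num)]
            norm_num
          have hlog4 : (1:ℝ)/8 ≤ (Real.log 2) ^ 4 := by
            nlinarith [Real.log_two_gt_d9, sq_nonneg (Real.log 2 - 0.6931471803),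
              sq_nonneg (Real.log 2)]
          refine le_of_pow_le_pow_left₀ (by norm_num : (4:ℕ) ≠ 0)
            (Real.log_nonneg one_le_two) ?_
          rw [h4]
          linarith
        have hdiv : Real.exp (-(3/4) * Real.log 2) * a / (3 * Real.log 2) ≤ a / 3 := by
          rw [div_le_div_iff₀ (by positivity) (by norm_num)]
          nlinarith [Real.exp_pos (-(3/4) * Real.log 2)]
        linarith



set_option maxHeartbeats 800000 in
lemma key_ineq (j : ℕ) (n1 n2 card : ℕ) (h1 : 1 ≤ n1) (h2 : 1 ≤ n2) (hc2 : card ≤ n2)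
    (hc1 : 1 ≤ card) (δ d v : ℝ) (hd : 0 < d) (hdδ : d ≤ δ)
    (hv : δ * Real.sqrt (Real.log ((2:ℝ) ^ (j+1) * n1 * n2)) ≤ v) :
    Real.exp (-(v ^ 2 / d ^ 2)) ≤ Real.exp (Real.log 2 *
      (9/4 - 3 * (v / (δ * Real.sqrt (Real.log ((2:ℝ) ^ (j+1) * n1 * n2)))))) / card := by
  have hδ : 0 < δ := lt_of_lt_of_le hd hdδ
  set L : ℝ := Real.log ((2:ℝ) ^ (j+1) * n1 * n2) with hLdef
  have hn1 : (1:ℝ) ≤ n1 := by exact_mod_cast h1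
  have hn2 : (1:ℝ) ≤ n2 := by exact_mod_cast h2
  have hL_eq : L = (j+1) * Real.log 2 + Real.log n1 + Real.log n2 := by
    rw [hLdef, Real.log_mul (by positivity) (by positivity),
      Real.log_mul (by positivity) (by positivity), Real.log_pow]
    push_cast
    ring
  have hlog2 : (0:ℝ) < Real.log 2 := Real.log_pos (by norm_num)
  have hlogn1 : (0:ℝ) ≤ Real.log n1 := Real.log_nonneg hn1
  have hlogn2 : (0:ℝ) ≤ Real.log n2 := Real.log_nonneg hn2
  have hLpos : 0 < L := by
    rw [hL_eq]
    have : (1:ℝ) ≤ (j:ℝ) + 1 := by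
      have := Nat.cast_nonneg (α := ℝ) j
      linarith
    nlinarith
  set a : ℝ := δ * Real.sqrt L with hadef
  have ha : 0 < a := by positivity
  set u : ℝ := v / a with hudef
  have hu : 1 ≤ u := (one_le_div ha).mpr hv
  have hv2 : u ^ 2 * L ≤ v ^ 2 / d ^ 2 := by
    have h1' : v ^ 2 / δ ^ 2 ≤ v ^ 2 / d ^ 2 :=
      div_le_div_of_nonneg_left (by positivity) (by positivity) (by nlinarith)
    have h2' : u ^ 2 * L = v ^ 2 / δ ^ 2 := by
      rw [hudef, hadef, div_pow, mul_pow, Real.sq_sqrt hLpos.le]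
      field_simp
    linarith
  have hcard : (0:ℝ) < card := by exact_mod_cast hc1
  rw [le_div_iff₀ hcard, ← Real.exp_log hcard, ← Real.exp_add, Real.exp_le_exp]
  have hlogcard : Real.log card ≤ Real.log n2 :=
    Real.log_le_log hcard (by exact_mod_cast hc2)
  have hj1 : (1:ℝ) ≤ (j:ℝ) + 1 := by
    have := Nat.cast_nonneg (α := ℝ) j
    linarith
  have hukey : 3 * u - 9/4 ≤ u ^ 2 := by nlinarith [sq_nonneg (u - 3/2)]
  have husq : 1 ≤ u ^ 2 := by nlinarith
  rw [hL_eq] at hv2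
  nlinarith [mul_le_mul_of_nonneg_left hj1 (mul_nonneg (sq_nonneg u) hlog2.le),
    mul_le_mul_of_nonneg_left husq hlogn2, mul_le_mul_of_nonneg_right hukey hlog2.le,
    mul_nonneg (sq_nonneg u) hlogn1]

set_option maxHeartbeats 1000000 in
/-- Dudley-type chaining bound: let `X : [0,∞) → ℂ` be a centered complex Gaussian process
with `X(0) = 0`, continuous sample paths, and `Exp(1)`-distributed normalized squared
increments `|X(s₁)-X(s₂)|²/d(s₁,s₂)²`.  If finite nets `π_j ⊆ [0,∞)` with `π₀ = {0}` and
`|π_j| ≤ N_j` satisfy `sup_{s>0} inf_{s'∈π_j} d(s,s') ≤ D^{1-j}` for a constant `D ≥ 2`,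
then `E[sup_{s>0}|X(s)|] ≤ (4/3) Σ_j D^{1-j} √(ln(2^{j+1} N_j N_{j+1}))`. -/
theorem stmt10 {Ω : Type*} [MeasurableSpace Ω] (P : Measure Ω) [IsProbabilityMeasure P]
    (X : ℝ → Ω → ℂ)
    (hXmeas : ∀ s, Measurable (X s))
    (hX0 : ∀ ω, X 0 ω = 0)
    (hXcont : ∀ ω, Continuous fun s => X s ω)
    (hXcentered : ∀ s, ∫ ω, X s ω ∂P = 0)
    (hXgauss : IsComplexGaussianFamily P X)
    (dX : ℝ → ℝ → ℝ)
    (hdX : ∀ s₁ s₂ : ℝ, dX s₁ s₂ = Real.sqrt (∫ ω, ‖X s₁ ω - X s₂ ω‖ ^ 2 ∂P))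
    (hexp : ∀ s₁ s₂ : ℝ, s₁ ≠ s₂ →
      Measure.map (fun ω => ‖X s₁ ω - X s₂ ω‖ ^ 2 / (dX s₁ s₂) ^ 2) P = expMeasure 1)
    (D : ℝ) (hD : 2 ≤ D)
    (π : ℕ → Finset ℝ) (N : ℕ → ℕ)
    (hπ0 : π 0 = {0})
    (hπnonneg : ∀ j, (π j : Set ℝ) ⊆ Set.Ici 0)
    (hπcard : ∀ j, (π j).card ≤ N j)
    (hπnet : ∀ j : ℕ, ∀ s : ℝ, 0 < s → ∃ s' ∈ π j, dX s s' ≤ D ^ ((1:ℝ) - j))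
    (A : ℝ)
    (hA : A = ∑' j : ℕ,
      D ^ ((1:ℝ) - j) * Real.sqrt (Real.log ((2:ℝ) ^ (j + 1) * N j * N (j + 1))))
    (hAsummable : Summable fun j : ℕ =>
      D ^ ((1:ℝ) - j) * Real.sqrt (Real.log ((2:ℝ) ^ (j + 1) * N j * N (j + 1)))) :
    ∫⁻ ω, (⨆ s : {s : ℝ // 0 < s}, ENNReal.ofReal ‖X s.1 ω‖) ∂P
      ≤ ENNReal.ofReal ((4 / 3) * A) := by
  classical
  have hD0 : (0:ℝ) < D := by linarith
  set δ : ℕ → ℝ := fun j => D ^ ((1:ℝ) - j) with hδdef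
  have hδpos : ∀ j, 0 < δ j := fun j => Real.rpow_pos_of_pos hD0 _
  have hδeq : ∀ j : ℕ, δ j = D * (D⁻¹) ^ j := by
    intro j
    show D ^ ((1:ℝ) - j) = _
    rw [show (1:ℝ) - j = 1 + (-(j:ℝ)) by ring, Real.rpow_add hD0, Real.rpow_one,
      Real.rpow_neg hD0.le, Real.rpow_natCast, inv_pow]
  have hπne : ∀ j, (π j).Nonempty := fun j => by
    obtain ⟨s', hs', -⟩ := hπnet j 1 one_pos; exact ⟨s', hs'⟩
  have hN1 : ∀ j, 1 ≤ N j := fun j => le_trans (Finset.card_pos.mpr (hπne j)) (hπcard j)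
  set L : ℕ → ℝ := fun j => Real.log ((2:ℝ) ^ (j + 1) * N j * N (j + 1)) with hLdef
  have hLpos : ∀ j, 0 < L j := by
    intro j
    apply Real.log_pos
    have h2 : (2:ℝ) ≤ (2:ℝ) ^ (j+1) := by
      calc (2:ℝ) = 2 ^ 1 := (pow_one 2).symm
        _ ≤ 2 ^ (j+1) := pow_le_pow_right₀ one_le_two (by omega)
    have hn1 : (1:ℝ) ≤ N j := by exact_mod_cast hN1 j
    have hn2 : (1:ℝ) ≤ N (j+1) := by exact_mod_cast hN1 (j+1)
    have hp1 : (2:ℝ) ≤ 2 ^ (j+1) * N j := by nlinarith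
    have hp2 : (2:ℝ) ≤ 2 ^ (j+1) * N j * N (j+1) := by nlinarith
    linarith
  set aa : ℕ → ℝ := fun j => δ j * Real.sqrt (L j) with haadef
  have haapos : ∀ j, 0 < aa j := fun j =>
    mul_pos (hδpos j) (Real.sqrt_pos.mpr (hLpos j))
  -- nearest point choice
  have hcex : ∀ j (t : ℝ), ∃ p : ℝ, (0 < t → p ∈ π j ∧ dX t p ≤ δ j) ∧ (¬ 0 < t → p = 0) := by
    intro j t
    by_cases h : 0 < t
    · obtain ⟨p, hp1, hp2⟩ := hπnet j t h
      exact ⟨p, fun _ => ⟨hp1, hp2⟩, fun h' => absurd h h'⟩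
    · exact ⟨0, fun h' => absurd h' h, fun _ => rfl⟩
  choose c hc1 hc2 using hcex
  -- basic facts on dX
  have hdnn : ∀ s₁ s₂, 0 ≤ dX s₁ s₂ := fun s₁ s₂ => by
    rw [hdX]; exact Real.sqrt_nonneg _
  have hdpos : ∀ s₁ s₂, s₁ ≠ s₂ → 0 < dX s₁ s₂ := fun s₁ s₂ h =>
    (hdnn s₁ s₂).lt_of_ne' (dpos_of_exp P _ _ (hexp s₁ s₂ h))
  have htail : ∀ s₁ s₂, s₁ ≠ s₂ → ∀ v : ℝ, 0 ≤ v →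
      P {ω | v < ‖X s₁ ω - X s₂ ω‖} ≤
        ENNReal.ofReal (Real.exp (-(v ^ 2 / (dX s₁ s₂) ^ 2))) := by
    intro s₁ s₂ hne v hv
    exact tail_bound P _ (((hXmeas s₁).sub (hXmeas s₂)).norm)
      (fun ω => norm_nonneg _) _ (hexp s₁ s₂ hne) v hv
  -- level-j maxima
  set M : ℕ → Ω → ℝ≥0∞ := fun j ω =>
    (π (j+1)).sup (fun q => ENNReal.ofReal ‖X q ω - X (c j q) ω‖) with hMdef
  have hMmeas : ∀ j, Measurable (M j) := by
    intro j
    have hne := hπne (j+1)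
    have heqM : M j = (π (j+1)).sup' hne (fun q ω => ENNReal.ofReal ‖X q ω - X (c j q) ω‖) := by
      funext ω
      rw [Finset.sup'_apply, Finset.sup'_eq_sup]
    rw [heqM]
    exact Finset.measurable_sup' hne (fun q _ =>
      ENNReal.measurable_ofReal.comp (((hXmeas q).sub (hXmeas (c j q))).norm))
  have hMint : ∀ j, ∫⁻ ω, M j ω ∂P ≤ ENNReal.ofReal ((4/3) * aa j) := by
    intro j
    apply sup_lintegral_bound P (π (j+1)) (fun q ω => ‖X q ω - X (c j q) ω‖)
      (fun q => ((hXmeas q).sub (hXmeas (c j q))).norm) (fun q ω => norm_nonneg _)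
      (aa j) (haapos j)
    intro q hq v hv
    have hv0 : (0:ℝ) < v := lt_of_lt_of_le (haapos j) hv
    by_cases hq0 : 0 < q
    · have hmem := (hc1 j q hq0).1
      have hdle := (hc1 j q hq0).2
      by_cases heq : q = c j q
      · have hempty : {ω | v < ‖X q ω - X (c j q) ω‖} = ∅ := by
          ext ω
          simp only [mem_setOf_eq, mem_empty_iff_false, iff_false, not_lt, ← heq,
            sub_self, norm_zero]
          exact hv0.le
        rw [hempty]
        simp
      · have hdp : 0 < dX q (c j q) := hdpos _ _ heq
        calc P {ω | v < ‖X q ω - X (c j q) ω‖}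
            ≤ ENNReal.ofReal (Real.exp (-(v ^ 2 / (dX q (c j q)) ^ 2))) :=
              htail q (c j q) heq v hv0.le
          _ ≤ _ := by
              apply ENNReal.ofReal_le_ofReal
              exact key_ineq j (N j) (N (j+1)) (π (j+1)).card (hN1 j) (hN1 (j+1))
                (hπcard (j+1)) (Finset.card_pos.mpr (hπne (j+1))) (δ j) _ v hdp hdle hv
    · have hq00 : q = 0 := le_antisymm (not_lt.mp hq0) (hπnonneg (j+1) hq)
      have hc0 : c j q = 0 := hc2 j q hq0
      have hempty : {ω | v < ‖X q ω - X (c j q) ω‖} = ∅ := by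
        ext ω
        simp only [mem_setOf_eq, mem_empty_iff_false, iff_false, not_lt, hc0, hq00,
          sub_self, norm_zero]
        have hcc : c j 0 = 0 := hq00 ▸ hc0
        rw [hcc, sub_self, norm_zero]
        exact hv0.le
      rw [hempty]
      simp
  set S : Ω → ℝ≥0∞ := fun ω => ∑' j, M j ω with hSdef
  -- chaining along the nets
  have hchain : ∀ k, ∀ t ∈ π k, ∀ ω,
      ENNReal.ofReal ‖X t ω‖ ≤ ∑ j ∈ Finset.range k, M j ω := by
    intro k
    induction k with
    | zero =>
      intro t ht ω
      rw [hπ0, Finset.mem_singleton] at ht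
      simp [ht, hX0]
    | succ k ih =>
      intro t ht ω
      by_cases h : 0 < t
      · have hmem := (hc1 k t h).1
        have tri : ‖X t ω‖ ≤ ‖X (c k t) ω‖ + ‖X t ω - X (c k t) ω‖ := by
          have : X t ω = X (c k t) ω + (X t ω - X (c k t) ω) := by ring
          calc ‖X t ω‖ = ‖X (c k t) ω + (X t ω - X (c k t) ω)‖ := by rw [← this]
            _ ≤ _ := norm_add_le _ _
        calc ENNReal.ofReal ‖X t ω‖
            ≤ ENNReal.ofReal (‖X (c k t) ω‖ + ‖X t ω - X (c k t) ω‖) :=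
              ENNReal.ofReal_le_ofReal tri
          _ ≤ ENNReal.ofReal ‖X (c k t) ω‖ + ENNReal.ofReal ‖X t ω - X (c k t) ω‖ :=
              ENNReal.ofReal_add_le
          _ ≤ (∑ j ∈ Finset.range k, M j ω) + M k ω := by
              refine add_le_add (ih _ hmem ω) ?_
              exact Finset.le_sup (f := fun q => ENNReal.ofReal ‖X q ω - X (c k q) ω‖) ht
          _ = ∑ j ∈ Finset.range (k+1), M j ω := (Finset.sum_range_succ _ k).symm
      · have ht0 : t = 0 := le_antisymm (not_lt.mp h) (hπnonneg (k+1) ht)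
        simp [ht0, hX0]
  have hchainS : ∀ k, ∀ t ∈ π k, ∀ ω, ENNReal.ofReal ‖X t ω‖ ≤ S ω := by
    intro k t ht ω
    exact le_trans (hchain k t ht ω) (ENNReal.sum_le_tsum (Finset.range k))
  -- approximation of arbitrary points
  have happrox : ∀ s : ℝ, 0 < s → ∀ᵐ ω ∂P, ENNReal.ofReal ‖X s ω‖ ≤ S ω := by
    intro s hs
    set t : ℕ → ℝ := fun k => c k s with htdef
    have htmem : ∀ k, t k ∈ π k := fun k => (hc1 k s hs).1
    have htd : ∀ k, dX s (t k) ≤ δ k := fun k => (hc1 k s hs).2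
    have hBad : ∀ ε : ℝ, 0 < ε → P {ω | ∀ k, ε < ‖X s ω - X (t k) ω‖} = 0 := by
      intro ε hε
      have hb : ∀ k, P {ω | ∀ k, ε < ‖X s ω - X (t k) ω‖}
          ≤ ENNReal.ofReal (Real.exp (-(ε ^ 2 / (δ k) ^ 2))) := by
        intro k
        have hsub : {ω | ∀ k', ε < ‖X s ω - X (t k') ω‖} ⊆
            {ω | ε < ‖X s ω - X (t k) ω‖} := fun ω h => h k
        by_cases heq : s = t k
        · have hempty : {ω | ε < ‖X s ω - X (t k) ω‖} = ∅ := by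
            ext ω
            simp [heq, sub_self, not_lt, hε.le]
          calc P _ ≤ P {ω | ε < ‖X s ω - X (t k) ω‖} := measure_mono hsub
            _ = 0 := by rw [hempty]; simp
            _ ≤ _ := zero_le
        · calc P _ ≤ P {ω | ε < ‖X s ω - X (t k) ω‖} := measure_mono hsub
            _ ≤ ENNReal.ofReal (Real.exp (-(ε ^ 2 / (dX s (t k)) ^ 2))) :=
                htail s (t k) heq ε hε.le
            _ ≤ ENNReal.ofReal (Real.exp (-(ε ^ 2 / (δ k) ^ 2))) := by
                apply ENNReal.ofReal_le_ofReal
                apply Real.exp_le_exp.mpr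
                have hdp := hdpos s (t k) heq
                have : ε ^ 2 / (δ k) ^ 2 ≤ ε ^ 2 / (dX s (t k)) ^ 2 :=
                  div_le_div_of_nonneg_left (by positivity) (by positivity)
                    (by nlinarith [htd k, hδpos k])
                linarith
      have harg : ∀ k : ℕ, ε ^ 2 / (δ k) ^ 2 = (ε ^ 2 / D ^ 2) * (D ^ 2) ^ k := by
        intro k
        rw [hδeq k]
        have hDk : (D:ℝ) ^ k ≠ 0 := pow_ne_zero _ hD0.ne'
        field_simp
        simp [← mul_pow, ← pow_mul, hD0.ne']
        rw [mul_comm k 2, inv_mul_cancel₀ (pow_ne_zero _ hD0.ne')]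
      have h1 : Tendsto (fun k : ℕ => (ε ^ 2 / D ^ 2) * (D ^ 2) ^ k) atTop atTop := by
        apply Tendsto.const_mul_atTop (by positivity)
        exact tendsto_pow_atTop_atTop_of_one_lt (by nlinarith)
      have h2 : Tendsto (fun k => Real.exp (-(ε ^ 2 / (δ k) ^ 2))) atTop (nhds 0) := by
        apply Real.tendsto_exp_atBot.comp
        simp_rw [harg]
        exact tendsto_neg_atTop_atBot.comp h1
      have h3 : Tendsto (fun k => ENNReal.ofReal (Real.exp (-(ε ^ 2 / (δ k) ^ 2))))
          atTop (nhds 0) := by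
        have := (ENNReal.continuous_ofReal.tendsto 0).comp h2
        rw [ENNReal.ofReal_zero] at this
        exact this
      exact le_antisymm (ge_of_tendsto h3 (Eventually.of_forall hb)) zero_le
    have hεae : ∀ m : ℕ, ∀ᵐ ω ∂P, ∃ k, ‖X s ω - X (t k) ω‖ ≤ 1/(m+1) := by
      intro m
      rw [ae_iff]
      have : {ω | ¬∃ k, ‖X s ω - X (t k) ω‖ ≤ 1/(m+1)} =
          {ω | ∀ k, 1/(m+1) < ‖X s ω - X (t k) ω‖} := by
        ext ω; simp [not_exists, not_le]
      rw [this]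
      exact hBad (1/(m+1)) (by positivity)
    have hall := ae_all_iff.mpr hεae
    filter_upwards [hall] with ω hω
    refine ENNReal.le_of_forall_pos_le_add ?_
    intro ε' hε' _
    obtain ⟨m, hm⟩ := exists_nat_one_div_lt (show (0:ℝ) < ε' by exact_mod_cast hε')
    obtain ⟨k, hk⟩ := hω m
    calc ENNReal.ofReal ‖X s ω‖
        ≤ ENNReal.ofReal (‖X (t k) ω‖ + 1/(m+1)) := by
          apply ENNReal.ofReal_le_ofReal
          have : X s ω = X (t k) ω + (X s ω - X (t k) ω) := by ring
          calc ‖X s ω‖ = ‖X (t k) ω + (X s ω - X (t k) ω)‖ := by rw [← this]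
            _ ≤ ‖X (t k) ω‖ + ‖X s ω - X (t k) ω‖ := norm_add_le _ _
            _ ≤ _ := by push_cast; linarith
      _ ≤ ENNReal.ofReal ‖X (t k) ω‖ + ENNReal.ofReal (1/(m+1)) := ENNReal.ofReal_add_le
      _ ≤ S ω + ↑ε' := by
          refine add_le_add (hchainS k (t k) (htmem k) ω) ?_
          calc ENNReal.ofReal (1/(m+1)) ≤ ENNReal.ofReal ε' :=
                ENNReal.ofReal_le_ofReal (by push_cast at hm ⊢; linarith)
            _ = ↑ε' := ENNReal.ofReal_coe_nnreal
  -- reduce to rationals via continuity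
  have hae : ∀ᵐ ω ∂P, ∀ q : {q : ℚ // 0 < q}, ENNReal.ofReal ‖X (q:ℝ) ω‖ ≤ S ω := by
    rw [ae_all_iff]
    intro q
    exact happrox q (by exact_mod_cast q.2)
  have hsup : ∀ᵐ ω ∂P, (⨆ s : {s : ℝ // 0 < s}, ENNReal.ofReal ‖X s.1 ω‖) ≤ S ω := by
    filter_upwards [hae] with ω hω
    refine iSup_le ?_
    rintro ⟨s, hs⟩
    have hq : ∀ n : ℕ, ∃ q : ℚ, s < (q:ℝ) ∧ (q:ℝ) < s + 1/(n+1) := by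
      intro n
      obtain ⟨q, h1, h2⟩ := exists_rat_btwn (show s < s + 1/(n+1) by
        have : (0:ℝ) < 1/(n+1) := by positivity
        linarith)
      exact ⟨q, h1, h2⟩
    choose u hu1 hu2 using hq
    have htend : Tendsto (fun n => (u n : ℝ)) atTop (nhds s) := by
      have h0 : Tendsto (fun n : ℕ => s + 1/(n+1 : ℝ)) atTop (nhds (s + 0)) :=
        tendsto_const_nhds.add tendsto_one_div_add_atTop_nhds_zero_nat
      rw [add_zero] at h0
      exact tendsto_of_tendsto_of_tendsto_of_le_of_le (g := fun _ => s)
        tendsto_const_nhds h0 (fun n => (hu1 n).le) (fun n => (hu2 n).le)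
    have hev : ∀ᶠ n in atTop, (0:ℝ) < (u n : ℝ) :=
      Eventually.of_forall (fun n => lt_trans hs (hu1 n))
    have hXconv : Tendsto (fun n => ENNReal.ofReal ‖X (u n : ℝ) ω‖) atTop
        (nhds (ENNReal.ofReal ‖X s ω‖)) := by
      apply (ENNReal.continuous_ofReal.tendsto _).comp
      exact (continuous_norm.tendsto _).comp (((hXcont ω).tendsto s).comp htend)
    refine le_of_tendsto hXconv ?_
    filter_upwards [hev] with n hn
    exact hω ⟨u n, by exact_mod_cast hn⟩
  -- put everything together
  calc ∫⁻ ω, (⨆ s : {s : ℝ // 0 < s}, ENNReal.ofReal ‖X s.1 ω‖) ∂P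
      ≤ ∫⁻ ω, S ω ∂P := lintegral_mono_ae hsup
    _ = ∑' j, ∫⁻ ω, M j ω ∂P := lintegral_tsum (fun j => (hMmeas j).aemeasurable)
    _ ≤ ∑' j, ENNReal.ofReal ((4/3) * aa j) := ENNReal.tsum_le_tsum hMint
    _ = ENNReal.ofReal (∑' j, (4/3) * aa j) := by
        rw [ENNReal.ofReal_tsum_of_nonneg (fun j => by positivity)
          (hAsummable.mul_left (4/3))]
    _ = ENNReal.ofReal ((4/3) * A) := by
        rw [hA, tsum_mul_left]
end

section
/- Equality-of-maxima sets of uniformly separated convex functions have measure zero: Let M₁, M₂ : ℝ² → ℝ be convex functions, and suppose there exist constants c₁ > c₂ > 0 such that for every z in the set D of Alexandrov twice-differentiability points of both functions, the Hessians satisfy (1/2)w^⊤ H₁(z) w ≥ c₁‖w‖² and (1/2)w^⊤ H₂(z) w ≤ c₂‖w‖² for all w ∈ ℝ². Then the set I = { z ∈ ℝ² : M₁(z) = M₂(z) } has Lebesgue measure zero. -/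
open MeasureTheory Set Asymptotics
open scoped RealInnerProductSpace

/-- Equality sets of uniformly separated convex functions have measure zero: if `M₁, M₂` are
convex on `ℝ²` and at every Alexandrov point `z ∈ D` (with `Dᶜ` Lebesgue-null) they admit
second-order expansions whose Hessian quadratic forms satisfy `(1/2)wᵀH₁(z)w ≥ c₁‖w‖²` and
`(1/2)wᵀH₂(z)w ≤ c₂‖w‖²` with `c₁ > c₂ > 0`, then `{z : M₁ z = M₂ z}` is Lebesgue-null. -/
theorem stmt17 (M₁ M₂ : EuclideanSpace ℝ (Fin 2) → ℝ)
    (hM₁ : ConvexOn ℝ Set.univ M₁) (hM₂ : ConvexOn ℝ Set.univ M₂)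
    (c₁ c₂ : ℝ) (hc : c₁ > c₂) (hc₂ : c₂ > 0)
    (D : Set (EuclideanSpace ℝ (Fin 2)))
    (hD : volume Dᶜ = 0)
    (hexp₁ : ∀ z ∈ D, ∃ (v : EuclideanSpace ℝ (Fin 2))
        (H : EuclideanSpace ℝ (Fin 2) →L[ℝ] EuclideanSpace ℝ (Fin 2)),
      ((fun w => M₁ (z + w) - M₁ z - ⟪v, w⟫ - (1 / 2) * ⟪w, H w⟫)
          =o[nhds 0] fun w => ‖w‖ ^ 2)
        ∧ ∀ w, c₁ * ‖w‖ ^ 2 ≤ (1 / 2) * ⟪w, H w⟫)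
    (hexp₂ : ∀ z ∈ D, ∃ (v : EuclideanSpace ℝ (Fin 2))
        (H : EuclideanSpace ℝ (Fin 2) →L[ℝ] EuclideanSpace ℝ (Fin 2)),
      ((fun w => M₂ (z + w) - M₂ z - ⟪v, w⟫ - (1 / 2) * ⟪w, H w⟫)
          =o[nhds 0] fun w => ‖w‖ ^ 2)
        ∧ ∀ w, (1 / 2) * ⟪w, H w⟫ ≤ c₂ * ‖w‖ ^ 2) :
    volume {z : EuclideanSpace ℝ (Fin 2) | M₁ z = M₂ z} = 0 := by
  classical
  set S : Set (EuclideanSpace ℝ (Fin 2)) := {z | M₁ z = M₂ z} with hSdef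
  by_contra hvol
  have hepos : (0:ℝ) < c₁ - c₂ := sub_pos.mpr hc
  -- continuity of convex functions on the whole space
  have hcont₁ : Continuous M₁ := by
    rw [← continuousOn_univ]
    exact hM₁.continuousOn isOpen_univ
  have hcont₂ : Continuous M₂ := by
    rw [← continuousOn_univ]
    exact hM₂.continuousOn isOpen_univ
  have hSm : MeasurableSet S := (isClosed_eq hcont₁ hcont₂).measurableSet
  -- pick a density point of S inside S ∩ D
  have hdens := Besicovitch.ae_tendsto_measure_inter_div
    (volume : Measure (EuclideanSpace ℝ (Fin 2))) S
  have hDae : ∀ᵐ x ∂(volume.restrict S), x ∈ D := by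
    refine Filter.Eventually.filter_mono (ae_mono Measure.restrict_le_self) ?_
    exact hD
  have hSae : ∀ᵐ x ∂(volume.restrict S), x ∈ S := ae_restrict_mem hSm
  have hne : (volume.restrict S) ≠ 0 :=
    fun h => hvol (Measure.restrict_eq_zero.mp h)
  have : (ae (volume.restrict S)).NeBot := ae_neBot.mpr hne
  obtain ⟨z, hzt, hzD, hzS⟩ := (hdens.and (hDae.and hSae)).exists
  -- expansions at z
  obtain ⟨v₁, H₁, ho₁, hH₁⟩ := hexp₁ z hzD
  obtain ⟨v₂, H₂, ho₂, hH₂⟩ := hexp₂ z hzD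
  -- combined little-o
  have ho : (fun w => (M₁ (z + w) - M₂ (z + w)) - (M₁ z - M₂ z) - ⟪v₁ - v₂, w⟫
      - ((1 / 2) * ⟪w, H₁ w⟫ - (1 / 2) * ⟪w, H₂ w⟫)) =o[nhds 0] fun w => ‖w‖ ^ 2 := by
    have := ho₁.sub ho₂
    apply this.congr' ?_ (Filter.EventuallyEq.refl _ _)
    filter_upwards with w
    simp [inner_sub_left]
    ring
  -- key rigidity: nearby symmetric pairs in S force w = 0
  have key : ∃ δ > 0, ∀ w : EuclideanSpace ℝ (Fin 2), ‖w‖ ≤ δ →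
      z + w ∈ S → z + -w ∈ S → w = 0 := by
    have hb := ho.def (show (0:ℝ) < (c₁ - c₂)/2 by linarith)
    rw [Metric.eventually_nhds_iff] at hb
    obtain ⟨ε, hε, hball⟩ := hb
    refine ⟨ε/2, by linarith, fun w hw h₁ h₂ => ?_⟩
    have hz0 : M₁ z - M₂ z = 0 := sub_eq_zero.mpr hzS
    have hkey : ∀ u : EuclideanSpace ℝ (Fin 2), ‖u‖ ≤ ε/2 → z + u ∈ S →
        ⟪v₁ - v₂, u⟫ ≤ -((c₁ - c₂)/2) * ‖u‖^2 := by
      intro u hu huS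
      have hd : dist u 0 < ε := by
        simp [dist_eq_norm]; linarith [norm_nonneg u]
      have := hball hd
      have hu0 : M₁ (z + u) - M₂ (z + u) = 0 := sub_eq_zero.mpr huS
      rw [hu0, hz0] at this
      have habs : |(0:ℝ) - 0 - ⟪v₁ - v₂, u⟫ - ((1 / 2) * ⟪u, H₁ u⟫ - (1 / 2) * ⟪u, H₂ u⟫)|
          ≤ (c₁ - c₂)/2 * ‖u‖^2 := by
        simpa [Real.norm_eq_abs, abs_of_nonneg (sq_nonneg ‖u‖), sq_abs] using this
      have hQ : (c₁ - c₂) * ‖u‖^2 ≤ (1 / 2) * ⟪u, H₁ u⟫ - (1 / 2) * ⟪u, H₂ u⟫ := by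
        have := hH₁ u
        have := hH₂ u
        nlinarith
      have := neg_abs_le ((0:ℝ) - 0 - ⟪v₁ - v₂, u⟫ - ((1 / 2) * ⟪u, H₁ u⟫ - (1 / 2) * ⟪u, H₂ u⟫))
      nlinarith [abs_nonneg ((0:ℝ) - 0 - ⟪v₁ - v₂, u⟫ - ((1 / 2) * ⟪u, H₁ u⟫ - (1 / 2) * ⟪u, H₂ u⟫))]
    have k₁ := hkey w hw h₁
    have k₂ := hkey (-w) (by simpa using hw) h₂
    rw [inner_neg_right] at k₂
    have : ‖w‖^2 ≤ 0 := by
      have hnw : ‖(-w : EuclideanSpace ℝ (Fin 2))‖ = ‖w‖ := norm_neg w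
      rw [hnw] at k₂
      nlinarith
    have : ‖w‖ = 0 := by nlinarith [norm_nonneg w, sq_nonneg ‖w‖]
    exact norm_eq_zero.mp this
  obtain ⟨δ, hδ, hkey⟩ := key
  -- reflection map
  set T : EuclideanSpace ℝ (Fin 2) → EuclideanSpace ℝ (Fin 2) := fun x => (z + z) - x with hT
  have hTmp : MeasurePreserving T volume volume := Measure.measurePreserving_sub_left volume (z + z)
  have hTball : ∀ r : ℝ, T ⁻¹' (Metric.closedBall z r) = Metric.closedBall z r := by
    intro r
    ext x
    simp only [mem_preimage, Metric.mem_closedBall, hT]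
    rw [dist_eq_norm, dist_eq_norm]
    congr 1
    have : z + z - x - z = -(x - z) := by abel
    rw [this, norm_neg]
  -- the density ratio is eventually ≤ 1/2
  have hhalf : ∀ r : ℝ, 0 < r → r ≤ δ →
      volume (S ∩ Metric.closedBall z r) / volume (Metric.closedBall z r) ≤ 1/2 := by
    intro r hr hrδ
    set B := Metric.closedBall z r with hB
    have hBm : volume B ≠ 0 := (Metric.measure_closedBall_pos volume z hr).ne'
    have hBt : volume B ≠ ⊤ := measure_closedBall_lt_top.ne
    have hinter : S ∩ B ∩ (T ⁻¹' S ∩ B) ⊆ {z} := by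
      rintro x ⟨⟨hxS, hxB⟩, hxTS, -⟩
      have hw : ‖x - z‖ ≤ δ := by
        rw [Metric.mem_closedBall, dist_eq_norm] at hxB
        linarith
      have h₁ : z + (x - z) ∈ S := by simpa using hxS
      have h₂ : z + -(x - z) ∈ S := by
        have : z + -(x - z) = T x := by simp [hT]; abel
        rw [this]; exact hxTS
      have := hkey (x - z) hw h₁ h₂
      have : x = z := by
        have := sub_eq_zero.mp this
        simpa using this
      simp [this]
    have hTS : volume (T ⁻¹' S ∩ B) = volume (S ∩ B) := by
      have : T ⁻¹' S ∩ B = T ⁻¹' (S ∩ B) := by rw [preimage_inter, hTball r]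
      rw [this, hTmp.measure_preimage (hSm.inter Metric.isClosed_closedBall.measurableSet).nullMeasurableSet]
    have hun : volume (S ∩ B) + volume (T ⁻¹' S ∩ B) ≤ volume B := by
      have h1 : volume ((S ∩ B) ∪ (T ⁻¹' S ∩ B)) + volume ((S ∩ B) ∩ (T ⁻¹' S ∩ B))
          = volume (S ∩ B) + volume (T ⁻¹' S ∩ B) :=
        measure_union_add_inter _ ((hTmp.measurable hSm).inter Metric.isClosed_closedBall.measurableSet)
      have h2 : volume ((S ∩ B) ∩ (T ⁻¹' S ∩ B)) = 0 := by
        refine measure_mono_null hinter ?_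
        exact measure_singleton z
      have h3 : volume ((S ∩ B) ∪ (T ⁻¹' S ∩ B)) ≤ volume B := by
        apply measure_mono
        rintro x (⟨-, hx⟩ | ⟨-, hx⟩) <;> exact hx
      calc volume (S ∩ B) + volume (T ⁻¹' S ∩ B)
          = volume ((S ∩ B) ∪ (T ⁻¹' S ∩ B)) + volume ((S ∩ B) ∩ (T ⁻¹' S ∩ B)) := h1.symm
        _ = volume ((S ∩ B) ∪ (T ⁻¹' S ∩ B)) := by rw [h2, add_zero]
        _ ≤ volume B := h3
    rw [hTS] at hun
    rw [ENNReal.div_le_iff hBm hBt]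
    have : volume (S ∩ B) + volume (S ∩ B) = 2 * volume (S ∩ B) := (two_mul _).symm
    rw [this] at hun
    have h4 : volume (S ∩ B) ≤ volume B / 2 :=
      (ENNReal.le_div_iff_mul_le (Or.inl two_ne_zero) (Or.inl ENNReal.ofNat_ne_top)).mpr
        (by rwa [mul_comm] at hun)
    rw [ENNReal.div_eq_inv_mul] at h4
    simpa [one_div] using h4
  -- contradiction with density 1
  have hev : ∀ᶠ r in nhdsWithin (0:ℝ) (Set.Ioi 0),
      volume (S ∩ Metric.closedBall z r) / volume (Metric.closedBall z r) ≤ 1/2 := by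
    filter_upwards [Icc_mem_nhdsGT_of_mem (Set.mem_Ico.mpr ⟨le_refl 0, hδ⟩),
      self_mem_nhdsWithin] with r hr hr'
    exact hhalf r hr' hr.2
  have hle : (1:ENNReal) ≤ 1/2 := le_of_tendsto hzt hev
  norm_num at hle
end

section
/- Local C¹ selection of the argmax: Let S : ℝ × (0,∞) → ℝ be twice continuously differentiable. Suppose at (t₀, s₀): ∂S/∂s(t₀,s₀) = 0 and ∂²S/∂s²(t₀,s₀) ≠ 0, s₀ is the unique global maximizer of S(t₀,·), the set-valued map σ(t) = argmax_{s>0} S(t,s) is upper hemicontinuous at t₀, and σ(t) is a singleton for all t in a dense subset Q of a neighborhood of t₀. Then there exist δ > 0 and a unique continuously differentiable function r : (t₀-δ, t₀+δ) → (0,∞) with r(t₀) = s₀, ∂S/∂s(t, r(t)) = 0 for all t, r(t) = σ(t) for t ∈ Q ∩ (t₀-δ,t₀+δ), and r(t) ∈ σ(t) for all t ∈ (t₀-δ,t₀+δ). -/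
open Set Filter Topology

private lemma aux_slice19 (G : ℝ × ℝ → ℝ) (p : ℝ × ℝ) (h : DifferentiableAt ℝ G p) :
    HasDerivAt (fun s => G (p.1, s)) ((fderiv ℝ G p) (0,1)) p.2 := by
  have hcurve : HasDerivAt (fun s : ℝ => (p.1, s)) ((0 : ℝ), (1 : ℝ)) p.2 :=
    (hasDerivAt_const _ _).prodMk (hasDerivAt_id _)
  exact h.hasFDerivAt.comp_hasDerivAt p.2 hcurve

set_option maxHeartbeats 1000000 in
/-- Local `C¹` selection of the argmax: let `S` be `C²` on `ℝ × (0,∞)`.  Suppose at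
`(t₀, s₀)`: `∂S/∂s(t₀,s₀) = 0`, `∂²S/∂s²(t₀,s₀) ≠ 0`, `s₀` is the unique global maximizer
of `S(t₀,·)` over `(0,∞)`, the set-valued map `σ(t) = argmax_{s>0} S(t,s)` is upper
hemicontinuous at `t₀`, and `σ(t)` is a singleton for all `t` in a dense set `Q`.  Then
there are `δ > 0` and a unique continuously differentiable `r : (t₀-δ,t₀+δ) → (0,∞)` with
`r(t₀) = s₀`, `∂S/∂s(t, r(t)) = 0`, `σ(t) = {r(t)}` for `t ∈ Q` near `t₀`, and
`r(t) ∈ σ(t)` for all `t` near `t₀`. -/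
theorem stmt19 (S : ℝ → ℝ → ℝ)
    (hS : ContDiffOn ℝ 2 (fun q : ℝ × ℝ => S q.1 q.2) (Set.univ ×ˢ Set.Ioi 0))
    (t₀ s₀ : ℝ) (hs₀ : 0 < s₀)
    (hcrit : deriv (S t₀) s₀ = 0)
    (hnondeg : deriv (deriv (S t₀)) s₀ ≠ 0)
    (σ : ℝ → Set ℝ)
    (hσ : ∀ t, σ t = {s | 0 < s ∧ ∀ s' : ℝ, 0 < s' → S t s' ≤ S t s})
    (hσt₀ : σ t₀ = {s₀})
    (huhc : ∀ U : Set ℝ, IsOpen U → σ t₀ ⊆ U →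
      ∃ δ > (0:ℝ), ∀ t : ℝ, |t - t₀| < δ → σ t ⊆ U)
    (Q : Set ℝ) (hQ : Dense Q)
    (hsingleton : ∀ t ∈ Q, ∃ s : ℝ, σ t = {s}) :
    ∃ δ > (0:ℝ), ∃ r : ℝ → ℝ,
      (ContDiffOn ℝ 1 r (Set.Ioo (t₀ - δ) (t₀ + δ))
        ∧ r t₀ = s₀
        ∧ (∀ t ∈ Set.Ioo (t₀ - δ) (t₀ + δ), 0 < r t ∧ deriv (S t) (r t) = 0)
        ∧ (∀ t ∈ Q ∩ Set.Ioo (t₀ - δ) (t₀ + δ), σ t = {r t})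
        ∧ (∀ t ∈ Set.Ioo (t₀ - δ) (t₀ + δ), r t ∈ σ t))
      ∧ ∀ r' : ℝ → ℝ,
          (ContDiffOn ℝ 1 r' (Set.Ioo (t₀ - δ) (t₀ + δ))
            ∧ r' t₀ = s₀
            ∧ (∀ t ∈ Set.Ioo (t₀ - δ) (t₀ + δ), 0 < r' t ∧ deriv (S t) (r' t) = 0)
            ∧ (∀ t ∈ Q ∩ Set.Ioo (t₀ - δ) (t₀ + δ), σ t = {r' t})
            ∧ (∀ t ∈ Set.Ioo (t₀ - δ) (t₀ + δ), r' t ∈ σ t)) →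
          ∀ t ∈ Set.Ioo (t₀ - δ) (t₀ + δ), r' t = r t := by
  set U : Set (ℝ × ℝ) := Set.univ ×ˢ Set.Ioi 0 with hUdef
  have hU : IsOpen U := isOpen_univ.prod isOpen_Ioi
  set Sh : ℝ × ℝ → ℝ := fun q : ℝ × ℝ => S q.1 q.2 with hShdef
  have hptU : ((t₀, s₀) : ℝ × ℝ) ∈ U := ⟨mem_univ _, hs₀⟩
  -- partial derivative in s equals fderiv applied to (0,1)
  have hpart : ∀ p ∈ U, HasDerivAt (S p.1) ((fderiv ℝ Sh p) (0,1)) p.2 := by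
    intro p hp
    exact aux_slice19 Sh p ((hS.contDiffAt (hU.mem_nhds hp)).differentiableAt (by norm_num))
  set F : ℝ × ℝ → ℝ := fun p => deriv (S p.1) p.2 with hFdef
  have hFeq : ∀ p ∈ U, F p = (fderiv ℝ Sh p) (0,1) := fun p hp => (hpart p hp).deriv
  have hF1 : ContDiffOn ℝ 1 F U := by
    have h1 : ContDiffOn ℝ 1 (fderiv ℝ Sh) U := hS.fderiv_of_isOpen hU (by norm_num)
    exact (h1.clm_apply contDiffOn_const).congr hFeq
  have hFat : ContDiffAt ℝ 1 F (t₀, s₀) := hF1.contDiffAt (hU.mem_nhds hptU)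
  -- the second partial derivative is nonzero
  have hb : (fderiv ℝ F (t₀, s₀)) (0,1) ≠ 0 := by
    have hd := (aux_slice19 F (t₀, s₀) (hFat.differentiableAt one_ne_zero)).deriv
    rw [← hd]; exact hnondeg
  have hF0 : F (t₀, s₀) = 0 := hcrit
  -- build the continuous linear equivalence
  set f' : ℝ × ℝ →L[ℝ] ℝ := fderiv ℝ F (t₀, s₀) with hf'def
  set a : ℝ := f' (1,0) with hadef
  set b : ℝ := f' (0,1) with hbdef
  set L : ℝ × ℝ →L[ℝ] ℝ × ℝ := (ContinuousLinearMap.fst ℝ ℝ ℝ).prod f' with hLdef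
  set M : ℝ × ℝ →L[ℝ] ℝ × ℝ :=
    (ContinuousLinearMap.fst ℝ ℝ ℝ).prod
      (b⁻¹ • (ContinuousLinearMap.snd ℝ ℝ ℝ - a • ContinuousLinearMap.fst ℝ ℝ ℝ)) with hMdef
  have happ : ∀ x y : ℝ, f' (x, y) = a * x + b * y := by
    intro x y
    have : (x, y) = x • ((1:ℝ), (0:ℝ)) + y • ((0:ℝ), (1:ℝ)) := by
      simp [Prod.ext_iff]
    rw [this, map_add, map_smul, map_smul]
    simp [hadef, hbdef, mul_comm]
  have hML : Function.LeftInverse M L := by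
    intro p
    simp only [hLdef, hMdef, ContinuousLinearMap.prod_apply, ContinuousLinearMap.coe_fst',
      ContinuousLinearMap.smul_apply, ContinuousLinearMap.sub_apply,
      ContinuousLinearMap.coe_snd', happ p.1 p.2]
    refine Prod.ext rfl ?_
    show b⁻¹ * (a * p.1 + b * p.2 - a * p.1) = p.2
    field_simp
    ring
  have hLM : Function.RightInverse M L := by
    intro p
    simp only [hLdef, hMdef, ContinuousLinearMap.prod_apply, ContinuousLinearMap.coe_fst',
      ContinuousLinearMap.smul_apply, ContinuousLinearMap.sub_apply,
      ContinuousLinearMap.coe_snd', happ]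
    refine Prod.ext rfl ?_
    show a * p.1 + b * (b⁻¹ * (p.2 - a * p.1)) = p.2
    field_simp
    ring
  set e : (ℝ × ℝ) ≃L[ℝ] (ℝ × ℝ) := ContinuousLinearEquiv.equivOfInverse L M hML hLM with hedef
  -- inverse function theorem
  set G : ℝ × ℝ → ℝ × ℝ := fun p => (p.1, F p) with hGdef
  have hGat : ContDiffAt ℝ 1 G (t₀, s₀) := contDiffAt_fst.prodMk hFat
  have hG' : HasFDerivAt G (e : ℝ × ℝ →L[ℝ] ℝ × ℝ) (t₀, s₀) := by
    show HasFDerivAt G L (t₀, s₀)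
    exact (hasFDerivAt_fst).prodMk (hFat.differentiableAt one_ne_zero).hasFDerivAt
  set H : ℝ × ℝ → ℝ × ℝ := hGat.localInverse hG' one_ne_zero with hHdef
  have hGpt : G (t₀, s₀) = (t₀, 0) := by simp [hGdef, hF0]
  have hHpt : H (t₀, 0) = (t₀, s₀) := by
    rw [← hGpt]; exact hGat.localInverse_apply_image hG' one_ne_zero
  have hHcd : ContDiffAt ℝ 1 H (t₀, 0) := by
    rw [← hGpt]; exact hGat.to_localInverse hG' one_ne_zero
  have hHinv : ∀ᶠ y in 𝓝 (t₀, (0:ℝ)), G (H y) = y := by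
    rw [← hGpt]
    exact (hGat.hasStrictFDerivAt' hG' one_ne_zero).eventually_right_inverse
  set r : ℝ → ℝ := fun t => (H (t, 0)).2 with hrdef
  have hr_cd : ContDiffAt ℝ 1 r t₀ := by
    have hc : ContDiffAt ℝ 1 (fun t : ℝ => ((t, (0:ℝ)) : ℝ × ℝ)) t₀ :=
      contDiffAt_id.prodMk contDiffAt_const
    exact contDiffAt_snd.comp t₀ (hHcd.comp t₀ hc)
  have hrt₀ : r t₀ = s₀ := by simp only [hrdef, hHpt]
  have hF0ev : ∀ᶠ t in 𝓝 t₀, F (t, r t) = 0 := by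
    have hmap : Tendsto (fun t : ℝ => ((t, (0:ℝ)) : ℝ × ℝ)) (𝓝 t₀) (𝓝 (t₀, 0)) :=
      (Continuous.prodMk continuous_id continuous_const).tendsto t₀
    filter_upwards [hmap.eventually hHinv] with t ht
    have h1 : (H (t, 0)).1 = t := congrArg Prod.fst ht
    have h2 : F (H (t, 0)) = 0 := congrArg Prod.snd ht
    rwa [← Prod.mk.eta (p := H (t, 0)), h1] at h2
  -- local uniqueness of the zero of F in the s-variable
  have hcont : ContinuousAt (fun p : ℝ × ℝ => b * (fderiv ℝ F p) (0,1)) (t₀, s₀) := by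
    have h1 : ContinuousOn (fderiv ℝ F) U := hF1.continuousOn_fderiv_of_isOpen hU le_rfl
    have h2 : ContinuousAt (fderiv ℝ F) (t₀, s₀) := h1.continuousAt (hU.mem_nhds hptU)
    exact continuousAt_const.mul
      ((ContinuousLinearMap.apply ℝ ℝ ((0:ℝ),(1:ℝ))).continuous.continuousAt.comp h2)
  have h0 : (0:ℝ) < b * b := mul_self_pos.mpr hb
  have hev : ∀ᶠ p in 𝓝 ((t₀, s₀) : ℝ × ℝ), p ∈ U ∧ 0 < b * (fderiv ℝ F p) (0,1) :=
    (hU.eventually_mem hptU).and (hcont.eventually (lt_mem_nhds h0))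
  obtain ⟨ε, hε, hball⟩ := Metric.eventually_nhds_iff_ball.mp hev
  have hmemball : ∀ t : ℝ, |t - t₀| < ε → ∀ s ∈ Ioo (s₀ - ε) (s₀ + ε),
      ((t, s) : ℝ × ℝ) ∈ Metric.ball ((t₀,s₀):ℝ×ℝ) ε := by
    intro t ht s hs
    rw [Metric.mem_ball, Prod.dist_eq]
    rw [mem_Ioo] at hs
    refine max_lt (by rwa [Real.dist_eq]) ?_
    rw [Real.dist_eq]
    exact abs_sub_lt_iff.mpr ⟨by linarith [hs.2], by linarith [hs.1]⟩
  have huniq : ∀ t : ℝ, |t - t₀| < ε → ∀ s1 ∈ Ioo (s₀ - ε) (s₀ + ε),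
      ∀ s2 ∈ Ioo (s₀ - ε) (s₀ + ε), F (t, s1) = 0 → F (t, s2) = 0 → s1 = s2 := by
    intro t ht s1 hs1 s2 hs2 hFz1 hFz2
    have hds : ∀ s ∈ Ioo (s₀ - ε) (s₀ + ε),
        HasDerivAt (fun s' => F (t, s')) ((fderiv ℝ F (t, s)) (0,1)) s := by
      intro s hs
      have hdiff : DifferentiableAt ℝ F (t, s) :=
        (hF1.contDiffAt (hU.mem_nhds (hball _ (hmemball t ht s hs)).1)).differentiableAt one_ne_zero
      exact aux_slice19 F (t, s) hdiff
    have hcontOn : ContinuousOn (fun s' => F (t, s')) (Ioo (s₀ - ε) (s₀ + ε)) :=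
      fun s hs => ((hds s hs).continuousAt).continuousWithinAt
    have hpos : ∀ s ∈ Ioo (s₀ - ε) (s₀ + ε), 0 < b * deriv (fun s' => F (t, s')) s := by
      intro s hs
      rw [(hds s hs).deriv]
      exact (hball _ (hmemball t ht s hs)).2
    have hinj : InjOn (fun s' => F (t, s')) (Ioo (s₀ - ε) (s₀ + ε)) := by
      rcases hb.lt_or_gt with hbneg | hbpos
    -- (the `b` in `hb` is syntactically `f' (0,1)` which is `b`)
      · refine (strictAntiOn_of_deriv_neg (convex_Ioo _ _) hcontOn ?_).injOn
        intro s hs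
        rw [interior_Ioo] at hs
        have := hpos s hs
        nlinarith
      · refine (strictMonoOn_of_deriv_pos (convex_Ioo _ _) hcontOn ?_).injOn
        intro s hs
        rw [interior_Ioo] at hs
        have := hpos s hs
        nlinarith
    exact hinj hs1 hs2 (by simp [hFz1, hFz2])
  have hWpos : ∀ s ∈ Ioo (s₀ - ε) (s₀ + ε), (0:ℝ) < s := by
    intro s hs
    have := (hball _ (hmemball t₀ (by simpa using hε) s hs)).1
    exact this.2
  -- collect the neighbourhood conditions and pick δ
  obtain ⟨u, hu_mem, hru⟩ : ∃ u ∈ 𝓝 t₀, ContDiffOn ℝ 1 r u :=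
    hr_cd.contDiffOn le_rfl (by simp)
  obtain ⟨δ₁, hδ₁, hδ₁sub⟩ := Metric.mem_nhds_iff.mp hu_mem
  have hrnear : ∀ᶠ t in 𝓝 t₀, r t ∈ Ioo (s₀ - ε) (s₀ + ε) := by
    have : Ioo (s₀ - ε) (s₀ + ε) ∈ 𝓝 (r t₀) := by
      rw [hrt₀]
      exact isOpen_Ioo.mem_nhds (by constructor <;> linarith)
    exact hr_cd.continuousAt.eventually_mem this
  obtain ⟨δ₂, hδ₂, hδ₂h⟩ := Metric.eventually_nhds_iff_ball.mp (hF0ev.and hrnear)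
  obtain ⟨δ₃, hδ₃, hδ₃h⟩ := huhc (Ioo (s₀ - ε) (s₀ + ε)) isOpen_Ioo
    (by rw [hσt₀]; intro x hx; rw [mem_singleton_iff] at hx; subst hx
        exact ⟨by linarith, by linarith⟩)
  set δ : ℝ := min (min δ₁ δ₂) (min δ₃ ε) with hδdef
  have hδpos : 0 < δ := lt_min (lt_min hδ₁ hδ₂) (lt_min hδ₃ hε)
  have habs : ∀ t ∈ Ioo (t₀ - δ) (t₀ + δ), |t - t₀| < δ := by
    intro t ht
    rw [mem_Ioo] at ht
    exact abs_sub_lt_iff.mpr ⟨by linarith [ht.2], by linarith [ht.1]⟩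
  -- basic facts for t in the interval
  have hkey : ∀ t ∈ Ioo (t₀ - δ) (t₀ + δ),
      F (t, r t) = 0 ∧ r t ∈ Ioo (s₀ - ε) (s₀ + ε) ∧ 0 < r t := by
    intro t ht
    have h2 := hδ₂h t (by
      rw [Metric.mem_ball, Real.dist_eq]
      exact lt_of_lt_of_le (habs t ht) ((min_le_left _ _).trans (min_le_right _ _)))
    exact ⟨h2.1, h2.2, hWpos _ h2.2⟩
  have hQkey : ∀ t ∈ Q ∩ Ioo (t₀ - δ) (t₀ + δ), σ t = {r t} := by
    rintro t ⟨htQ, htI⟩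
    obtain ⟨st, hst⟩ := hsingleton t htQ
    have hstmem : st ∈ σ t := by rw [hst]; exact mem_singleton _
    rw [hσ t] at hstmem
    obtain ⟨hstpos, hstmax⟩ := hstmem
    have hstW : st ∈ Ioo (s₀ - ε) (s₀ + ε) := by
      have := hδ₃h t (lt_of_lt_of_le (habs t htI) ((min_le_right _ _).trans (min_le_left _ _)))
      exact this (by rw [hst]; exact mem_singleton _)
    have hlocmax : IsLocalMax (S t) st := by
      filter_upwards [isOpen_Ioi.eventually_mem hstpos] with s' hs'
      exact hstmax s' hs'
    have hFst : F (t, st) = 0 := hlocmax.deriv_eq_zero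
    obtain ⟨hFr, hrW, _⟩ := hkey t htI
    have : st = r t :=
      huniq t (lt_of_lt_of_le (habs t htI) ((min_le_right _ _).trans (min_le_right _ _)))
        st hstW (r t) hrW hFst hFr
    rw [hst, this]
  have hrcont : ∀ t ∈ Ioo (t₀ - δ) (t₀ + δ), ContinuousAt r t := by
    intro t ht
    have hsub : Ioo (t₀ - δ) (t₀ + δ) ⊆ u := by
      intro x hx
      exact hδ₁sub (by
        rw [Metric.mem_ball, Real.dist_eq]
        exact lt_of_lt_of_le (habs x hx) ((min_le_left _ _).trans (min_le_left _ _)))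
    exact (hru.continuousOn.mono hsub).continuousAt (isOpen_Ioo.mem_nhds ht)
  -- sequences from Q
  have hseq : ∀ t ∈ Ioo (t₀ - δ) (t₀ + δ), ∃ x : ℕ → ℝ,
      (∀ n, x n ∈ Ioo (t₀ - δ) (t₀ + δ) ∩ Q) ∧ Tendsto x atTop (𝓝 t) := by
    intro t ht
    have := hQ.open_subset_closure_inter (isOpen_Ioo (a := t₀ - δ) (b := t₀ + δ))
    exact mem_closure_iff_seq_limit.mp (this ht)
  have hShcont : ∀ p ∈ U, ContinuousAt Sh p :=
    fun p hp => (hS.continuousOn.continuousAt (hU.mem_nhds hp))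
  refine ⟨δ, hδpos, r, ⟨?_, hrt₀, ?_, hQkey, ?_⟩, ?_⟩
  · -- ContDiffOn
    refine hru.mono ?_
    intro x hx
    exact hδ₁sub (by
      rw [Metric.mem_ball, Real.dist_eq]
      exact lt_of_lt_of_le (habs x hx) ((min_le_left _ _).trans (min_le_left _ _)))
  · -- positivity and criticality
    intro t ht
    obtain ⟨hFr, _, hrpos⟩ := hkey t ht
    exact ⟨hrpos, hFr⟩
  · -- r t ∈ σ t
    intro t ht
    obtain ⟨_, _, hrpos⟩ := hkey t ht
    rw [hσ t]
    refine ⟨hrpos, ?_⟩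
    intro s' hs'
    obtain ⟨x, hxmem, hxlim⟩ := hseq t ht
    have hle : ∀ n, S (x n) s' ≤ S (x n) (r (x n)) := by
      intro n
      have hmem : r (x n) ∈ σ (x n) := by
        rw [hQkey (x n) ⟨(hxmem n).2, (hxmem n).1⟩]; exact mem_singleton _
      rw [hσ (x n)] at hmem
      exact hmem.2 s' hs'
    have h1 : Tendsto (fun n => S (x n) s') atTop (𝓝 (S t s')) :=
      (hShcont (t, s') ⟨mem_univ _, hs'⟩).tendsto.comp
        (hxlim.prodMk_nhds tendsto_const_nhds)
    have h2 : Tendsto (fun n => S (x n) (r (x n))) atTop (𝓝 (S t (r t))) :=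
      (hShcont (t, r t) ⟨mem_univ _, hrpos⟩).tendsto.comp
        (hxlim.prodMk_nhds ((hrcont t ht).tendsto.comp hxlim))
    exact le_of_tendsto_of_tendsto' h1 h2 hle
  · -- uniqueness
    rintro r' ⟨hr'cd, _, _, hr'Q, _⟩ t ht
    obtain ⟨x, hxmem, hxlim⟩ := hseq t ht
    have heq : ∀ n, r' (x n) = r (x n) := by
      intro n
      have h1 := hQkey (x n) ⟨(hxmem n).2, (hxmem n).1⟩
      have h2 := hr'Q (x n) ⟨(hxmem n).2, (hxmem n).1⟩
      have := h2.symm.trans h1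
      exact (singleton_eq_singleton_iff.mp this)
    have hr'c : ContinuousAt r' t :=
      (hr'cd.continuousOn).continuousAt (isOpen_Ioo.mem_nhds ht)
    have h1 : Tendsto (fun n => r' (x n)) atTop (𝓝 (r' t)) :=
      hr'c.tendsto.comp hxlim
    have h2 : Tendsto (fun n => r' (x n)) atTop (𝓝 (r t)) := by
      have := (hrcont t ht).tendsto.comp hxlim
      exact this.congr (fun n => (heq n).symm)
    exact tendsto_nhds_unique h1 h2
end
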